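/- arXiv:1806.00785 — 8 statements merged into one kernel-verified Lean document; each statement's English description precedes it below -/
import Mathlib

section
/- If a topological space X is F-Y countably π-domain representable, then player α has a winning strategy in the Banach–Mazur game on X (i.e., X is weakly α-favorable). -/
open Set TopologicalSpace

universe u v

/-! ### The Banach–Mazur game -/

/-- Response of α's strategy `s` to β's moves `U 0, …, U n` in the Banach–Mazur game. -/
def bmResp {X : Type v} (s : ∀ n : ℕ, (Fin (n + 1) → Set X) → Set X)
    (U : ℕ → Set X) (n : ℕ) : Set X :=
  s n (fun i => U i)

/-- β's moves `U 0, …, U n` form a legal partial play against the strategy `s`: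
each `U k` is a nonempty open set and `U (k+1)` is contained in α's previous response. -/
def bmLegal {X : Type v} [TopologicalSpace X]
    (s : ∀ n : ℕ, (Fin (n + 1) → Set X) → Set X) (U : ℕ → Set X) (n : ℕ) : Prop :=
  (∀ k ≤ n, IsOpen (U k) ∧ (U k).Nonempty) ∧
  (∀ k, k + 1 ≤ n → U (k + 1) ⊆ bmResp s U k)

/-- `s` is a winning strategy for α in the Banach–Mazur game: to any legal partial play
it responds with a nonempty open subset of β's last move, and the intersection of its
responses along any infinite legal play is nonempty. -/
def IsBMWinning {X : Type v} [TopologicalSpace X]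
    (s : ∀ n : ℕ, (Fin (n + 1) → Set X) → Set X) : Prop :=
  (∀ U n, bmLegal s U n →
      IsOpen (bmResp s U n) ∧ (bmResp s U n).Nonempty ∧ bmResp s U n ⊆ U n) ∧
  (∀ U : ℕ → Set X, (∀ n, bmLegal s U n) → (⋂ n, bmResp s U n).Nonempty)

/-- A space is weakly α-favorable if α has a winning strategy in the Banach–Mazur game. -/
def WeaklyAlphaFavorable (X : Type v) [TopologicalSpace X] : Prop :=
  ∃ s : ∀ n : ℕ, (Fin (n + 1) → Set X) → Set X, IsBMWinning s

/-! ### The strong Choquet game -/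

/-- Response of α's strategy `s` to β's moves `(x 0, U 0), …, (x n, U n)`. -/
def scResp {X : Type v} (s : ∀ n : ℕ, (Fin (n + 1) → X × Set X) → Set X)
    (p : ℕ → X × Set X) (n : ℕ) : Set X :=
  s n (fun i => p i)

/-- β's moves `(x k, U k)` for `k ≤ n` form a legal partial play of the strong Choquet game
against `s`: each `U k` is open with `x k ∈ U k`, and `U (k+1)` is contained in α's previous
response. -/
def scLegal {X : Type v} [TopologicalSpace X]
    (s : ∀ n : ℕ, (Fin (n + 1) → X × Set X) → Set X) (p : ℕ → X × Set X) (n : ℕ) : Prop :=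
  (∀ k ≤ n, IsOpen (p k).2 ∧ (p k).1 ∈ (p k).2) ∧
  (∀ k, k + 1 ≤ n → (p (k + 1)).2 ⊆ scResp s p k)

/-- `s` is a winning strategy for α in the strong Choquet game. -/
def IsSCWinning {X : Type v} [TopologicalSpace X]
    (s : ∀ n : ℕ, (Fin (n + 1) → X × Set X) → Set X) : Prop :=
  (∀ p n, scLegal s p n →
      IsOpen (scResp s p n) ∧ (p n).1 ∈ scResp s p n ∧ scResp s p n ⊆ (p n).2) ∧
  (∀ p : ℕ → X × Set X, (∀ n, scLegal s p n) → (⋂ n, scResp s p n).Nonempty)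

/-- A space is Choquet complete if α has a winning strategy in the strong Choquet game. -/
def ChoquetComplete (X : Type v) [TopologicalSpace X] : Prop :=
  ∃ s : ∀ n : ℕ, (Fin (n + 1) → X × Set X) → Set X, IsSCWinning s

/-! ### Fleissner–Yengulalp domain representability -/

/-- X is F-Y countably π-domain representable: there is a triple `(Q, ≪, B)` where
`B` maps `Q` to nonempty open sets forming a π-base, `≪` is transitive, `p ≪ q`
implies `B p ⊇ B q`, any two elements whose `B`-values meet have a common upper bound,
and every countable upward directed `D ⊆ Q` has `⋂ {B q : q ∈ D} ≠ ∅`. -/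
def FYCountablyPiDomainRep (X : Type v) [TopologicalSpace X] : Prop :=
  ∃ (Q : Type u) (r : Q → Q → Prop) (B : Q → Set X),
    (∀ q, IsOpen (B q) ∧ (B q).Nonempty) ∧
    (∀ U : Set X, IsOpen U → U.Nonempty → ∃ q, B q ⊆ U) ∧
    Transitive r ∧
    (∀ p q, r p q → B q ⊆ B p) ∧
    (∀ p q, (B p ∩ B q).Nonempty → ∃ t, r p t ∧ r q t) ∧
    (∀ D : Set Q, D.Nonempty → D.Countable → DirectedOn r D → (⋂ q ∈ D, B q).Nonempty)

/-- X is F-Y π-domain representable (the intersection condition holds for all upward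
directed subsets, of arbitrary cardinality). -/
def FYPiDomainRep (X : Type v) [TopologicalSpace X] : Prop :=
  ∃ (Q : Type u) (r : Q → Q → Prop) (B : Q → Set X),
    (∀ q, IsOpen (B q) ∧ (B q).Nonempty) ∧
    (∀ U : Set X, IsOpen U → U.Nonempty → ∃ q, B q ⊆ U) ∧
    Transitive r ∧
    (∀ p q, r p q → B q ⊆ B p) ∧
    (∀ p q, (B p ∩ B q).Nonempty → ∃ t, r p t ∧ r q t) ∧
    (∀ D : Set Q, D.Nonempty → DirectedOn r D → (⋂ q ∈ D, B q).Nonempty)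

/-- X is F-Y countably domain representable: there is a triple `(Q, ≪, B)` where
`B` maps `Q` to nonempty open sets forming a base, `≪` is transitive, `p ≪ q`
implies `B p ⊇ B q`, for every point `x` the set `{q : x ∈ B q}` is upward directed,
and every countable upward directed `D ⊆ Q` has `⋂ {B q : q ∈ D} ≠ ∅`. -/
def FYCountablyDomainRep (X : Type v) [TopologicalSpace X] : Prop :=
  ∃ (Q : Type u) (r : Q → Q → Prop) (B : Q → Set X),
    (∀ q, IsOpen (B q) ∧ (B q).Nonempty) ∧
    (∀ U : Set X, IsOpen U → ∀ x ∈ U, ∃ q, x ∈ B q ∧ B q ⊆ U) ∧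
    Transitive r ∧
    (∀ p q, r p q → B q ⊆ B p) ∧
    (∀ x : X, DirectedOn r {q | x ∈ B q}) ∧
    (∀ D : Set Q, D.Nonempty → D.Countable → DirectedOn r D → (⋂ q ∈ D, B q).Nonempty)

/-- X is F-Y domain representable (the intersection condition holds for all upward
directed subsets, of arbitrary cardinality). -/
def FYDomainRep (X : Type v) [TopologicalSpace X] : Prop :=
  ∃ (Q : Type u) (r : Q → Q → Prop) (B : Q → Set X),
    (∀ q, IsOpen (B q) ∧ (B q).Nonempty) ∧
    (∀ U : Set X, IsOpen U → ∀ x ∈ U, ∃ q, x ∈ B q ∧ B q ⊆ U) ∧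
    Transitive r ∧
    (∀ p q, r p q → B q ⊆ B p) ∧
    (∀ x : X, DirectedOn r {q | x ∈ B q}) ∧
    (∀ D : Set Q, D.Nonempty → DirectedOn r D → (⋂ q ∈ D, B q).Nonempty)

/-! ### The space σ({0,1}^{ω₁}) with the ω₁-box topology -/

/-- The σ-product of the Cantor cube over `I`: points with countable support. -/
def Sigma01 (I : Type v) : Type v := {x : I → Bool // {a | x a = true}.Countable}

/-- The basic set `pr_A⁻¹(f↾A)`: points of the σ-product agreeing with `f` on `A`. -/
def basicSet (I : Type v) (A : Set I) (f : I → Bool) : Set (Sigma01 I) :=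
  {y | ∀ a ∈ A, y.1 a = f a}

/-- The ω₁-box topology on the σ-product, generated by the sets `pr_A⁻¹(f↾A)`
for countable `A`. -/
instance Sigma01.topologicalSpace (I : Type v) : TopologicalSpace (Sigma01 I) :=
  TopologicalSpace.generateFrom
    {U | ∃ (A : Set I) (f : I → Bool), A.Countable ∧ U = basicSet I A f}

section FYAux
open scoped Classical

variable {X : Type v} [TopologicalSpace X] {Q : Type u}

/-- Existence of a "next move" for α. -/
theorem fy_exists_next (r : Q → Q → Prop) (B : Q → Set X)
    (hB : ∀ q, IsOpen (B q) ∧ (B q).Nonempty)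
    (hbase : ∀ U : Set X, IsOpen U → U.Nonempty → ∃ q, B q ⊆ U)
    (hsub : ∀ p q, r p q → B q ⊆ B p)
    (hmeet : ∀ p q, (B p ∩ B q).Nonempty → ∃ t, r p t ∧ r q t)
    (q : Q) (U : Set X) (hU : IsOpen U) (hne : U.Nonempty) (hUq : U ⊆ B q) :
    ∃ t, r q t ∧ B t ⊆ U := by
  obtain ⟨p, hp⟩ := hbase U hU hne
  obtain ⟨x, hx⟩ := (hB p).2
  obtain ⟨t, hqt, hpt⟩ := hmeet q p ⟨x, hUq (hp hx), hx⟩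
  exact ⟨t, hqt, (hsub p t hpt).trans hp⟩

/-- α's first move: some `q` with `B q ⊆ U`. -/
noncomputable def fyInit [Inhabited Q] (B : Q → Set X)
    (hbase : ∀ U : Set X, IsOpen U → U.Nonempty → ∃ q, B q ⊆ U) (U : Set X) : Q :=
  if h : IsOpen U ∧ U.Nonempty then (hbase U h.1 h.2).choose else default

theorem fyInit_spec [Inhabited Q] (B : Q → Set X)
    (hbase : ∀ U : Set X, IsOpen U → U.Nonempty → ∃ q, B q ⊆ U) (U : Set X)
    (hU : IsOpen U) (hne : U.Nonempty) : B (fyInit B hbase U) ⊆ U := by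
  rw [fyInit, dif_pos ⟨hU, hne⟩]
  exact (hbase U hU hne).choose_spec

/-- α's subsequent moves. -/
noncomputable def fyNext [Inhabited Q] (r : Q → Q → Prop) (B : Q → Set X)
    (hB : ∀ q, IsOpen (B q) ∧ (B q).Nonempty)
    (hbase : ∀ U : Set X, IsOpen U → U.Nonempty → ∃ q, B q ⊆ U)
    (hsub : ∀ p q, r p q → B q ⊆ B p)
    (hmeet : ∀ p q, (B p ∩ B q).Nonempty → ∃ t, r p t ∧ r q t)
    (q : Q) (U : Set X) : Q :=
  if h : IsOpen U ∧ U.Nonempty ∧ U ⊆ B q then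
    (fy_exists_next r B hB hbase hsub hmeet q U h.1 h.2.1 h.2.2).choose
  else default

theorem fyNext_spec [Inhabited Q] (r : Q → Q → Prop) (B : Q → Set X)
    (hB : ∀ q, IsOpen (B q) ∧ (B q).Nonempty)
    (hbase : ∀ U : Set X, IsOpen U → U.Nonempty → ∃ q, B q ⊆ U)
    (hsub : ∀ p q, r p q → B q ⊆ B p)
    (hmeet : ∀ p q, (B p ∩ B q).Nonempty → ∃ t, r p t ∧ r q t)
    (q : Q) (U : Set X) (hU : IsOpen U) (hne : U.Nonempty) (hUq : U ⊆ B q) :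
    r q (fyNext r B hB hbase hsub hmeet q U) ∧
      B (fyNext r B hB hbase hsub hmeet q U) ⊆ U := by
  rw [fyNext, dif_pos ⟨hU, hne, hUq⟩]
  exact (fy_exists_next r B hB hbase hsub hmeet q U hU hne hUq).choose_spec

/-- The element of `Q` recording α's state after β's moves `U 0, …, U n`. -/
noncomputable def fyQ (init : Set X → Q) (next : Q → Set X → Q) :
    ∀ n : ℕ, (Fin (n + 1) → Set X) → Q
  | 0, U => init (U 0)
  | n + 1, U => next (fyQ init next n (fun i => U i.castSucc)) (U (Fin.last (n + 1)))

end FYAux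

/-- F-Y countably π-domain representable implies weakly α-favorable. -/
theorem stmt0 {X : Type v} [TopologicalSpace X]
    (h : FYCountablyPiDomainRep.{u} X) : WeaklyAlphaFavorable X := by
  by_cases hX : Nonempty X
  · obtain ⟨Q, r, B, hB, hbase, htrans, hsub, hmeet, hdir⟩ := h
    obtain ⟨x0⟩ := hX
    haveI : Inhabited Q := ⟨(hbase univ isOpen_univ ⟨x0, trivial⟩).choose⟩
    set nxt := fyNext r B hB hbase hsub hmeet with hnxt
    set ini := fyInit B hbase with hini
    have key : ∀ (U : ℕ → Set X) m, bmLegal (fun n U => B (fyQ ini nxt n U)) U m →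
        B (fyQ ini nxt m (fun i : Fin (m + 1) => U i)) ⊆ U m ∧
        (∀ k, k + 1 ≤ m →
          r (fyQ ini nxt k (fun i : Fin (k + 1) => U i))
            (fyQ ini nxt (k + 1) (fun i : Fin (k + 2) => U i))) := by
      intro U m
      induction m with
      | zero =>
        intro hl
        refine ⟨?_, fun k hk => by omega⟩
        exact fyInit_spec B hbase (U 0) (hl.1 0 le_rfl).1 (hl.1 0 le_rfl).2
      | succ m ih =>
        intro hl
        have hl' : bmLegal (fun n U => B (fyQ ini nxt n U)) U m :=
          ⟨fun k hk => hl.1 k (hk.trans (Nat.le_succ m)),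
           fun k hk => hl.2 k (hk.trans (Nat.le_succ m))⟩
        obtain ⟨ihsub, ihchain⟩ := ih hl'
        have hUm : U (m + 1) ⊆ B (fyQ ini nxt m (fun i : Fin (m + 1) => U i)) :=
          hl.2 m le_rfl
        have hUo := hl.1 (m + 1) le_rfl
        have heq : fyQ ini nxt (m + 1) (fun i : Fin (m + 2) => U i) =
            nxt (fyQ ini nxt m (fun i : Fin (m + 1) => U i)) (U (m + 1)) := rfl
        have hspec := fyNext_spec r B hB hbase hsub hmeet
          (fyQ ini nxt m (fun i : Fin (m + 1) => U i)) (U (m + 1))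
          hUo.1 hUo.2 hUm
        rw [heq]
        refine ⟨hspec.2, fun k hk => ?_⟩
        rcases Nat.lt_or_ge k m with hkm | hkm
        · exact ihchain k hkm
        · have : k = m := by omega
          subst this
          exact hspec.1
    refine ⟨fun n U => B (fyQ ini nxt n U), fun U n hleg => ?_, fun U hleg => ?_⟩
    · exact ⟨(hB _).1, (hB _).2, (key U n hleg).1⟩
    · set q : ℕ → Q := fun n => fyQ ini nxt n (fun i : Fin (n + 1) => U i) with hq
      have hchain : ∀ k, r (q k) (q (k + 1)) := fun k =>
        (key U (k + 1) (hleg (k + 1))).2 k le_rfl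
      have hmono : ∀ m n, m < n → r (q m) (q n) := by
        intro m n hmn
        induction n with
        | zero => omega
        | succ n ih =>
          rcases Nat.lt_or_ge m n with h1 | h1
          · exact htrans (ih h1) (hchain n)
          · have : m = n := by omega
            subst this
            exact hchain m
      have hD : (⋂ t ∈ Set.range q, B t).Nonempty := by
        refine hdir _ ⟨q 0, ⟨0, rfl⟩⟩ (Set.countable_range q) ?_
        rintro _ ⟨m, rfl⟩ _ ⟨n, rfl⟩
        exact ⟨q (max m n + 1), ⟨max m n + 1, rfl⟩,
          hmono m _ (by omega), hmono n _ (by omega)⟩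
      obtain ⟨y, hy⟩ := hD
      refine ⟨y, Set.mem_iInter.2 fun n => ?_⟩
      simp only [Set.mem_iInter] at hy
      exact hy (q n) ⟨n, rfl⟩
  · refine ⟨fun _ _ => ∅, fun U n hleg => ?_, fun U hleg => ?_⟩
    · obtain ⟨x, -⟩ := (hleg.1 0 (Nat.zero_le n)).2
      exact (hX ⟨x⟩).elim
    · obtain ⟨x, -⟩ := ((hleg 0).1 0 le_rfl).2
      exact (hX ⟨x⟩).elim
end

section
/- If a topological space X is F-Y countably domain representable, then player α has a winning strategy in the strong Choquet game on X (X is Choquet complete). -/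
open Set TopologicalSpace

universe u v

open Classical in
/-- Auxiliary: α's recursive choice of domain elements along a play. -/
noncomputable def fyQseq {X : Type v} {Q : Type u} (r : Q → Q → Prop) (B : Q → Set X)
    (q₀ : Q) : ∀ n : ℕ, (Fin (n + 1) → X × Set X) → Q
  | 0, p =>
    if h : ∃ t, (p 0).1 ∈ B t ∧ B t ⊆ (p 0).2 then h.choose else q₀
  | (n + 1), p =>
    if h : ∃ t, (p (Fin.last (n + 1))).1 ∈ B t ∧ B t ⊆ (p (Fin.last (n + 1))).2 ∧
        r (fyQseq r B q₀ n (fun i => p i.castSucc)) t then h.choose else q₀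

/-- F-Y countably domain representable implies Choquet complete. -/
theorem stmt3 {X : Type v} [TopologicalSpace X]
    (h : FYCountablyDomainRep.{u} X) : ChoquetComplete X := by
  obtain ⟨Q, r, B, hvals, hbase, htrans, hmono, hdir, hcap⟩ := h
  by_cases hX : Nonempty X
  · obtain ⟨x₀⟩ := hX
    obtain ⟨q₀, -, -⟩ := hbase univ isOpen_univ x₀ (mem_univ x₀)
    set s : ∀ n : ℕ, (Fin (n + 1) → X × Set X) → Set X :=
      fun n p => B (fyQseq r B q₀ n p) with hs
    have key : ∀ (p : ℕ → X × Set X) (n : ℕ), scLegal s p n →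
        ((p n).1 ∈ B (fyQseq r B q₀ n (fun i => p i)) ∧
          B (fyQseq r B q₀ n (fun i => p i)) ⊆ (p n).2) ∧
        (∀ m, m + 1 ≤ n →
          r (fyQseq r B q₀ m (fun i => p i)) (fyQseq r B q₀ (m + 1) (fun i => p i))) := by
      intro p n
      induction n with
      | zero =>
        intro hleg
        obtain ⟨hU, hx⟩ := hleg.1 0 le_rfl
        have hex : ∃ t, ((fun i : Fin 1 => p i) 0).1 ∈ B t ∧
            B t ⊆ ((fun i : Fin 1 => p i) 0).2 := hbase _ hU _ hx
        refine ⟨?_, fun m hm => absurd hm (by omega)⟩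
        show (p 0).1 ∈ B (fyQseq r B q₀ 0 (fun i => p i)) ∧ _
        rw [fyQseq, dif_pos hex]
        exact ⟨hex.choose_spec.1, hex.choose_spec.2⟩
      | succ n ih =>
        intro hleg
        have hleg' : scLegal s p n :=
          ⟨fun k hk => hleg.1 k (hk.trans (Nat.le_succ n)),
           fun k hk => hleg.2 k (hk.trans (Nat.le_succ n))⟩
        obtain ⟨⟨hxmem, hsub⟩, hchain⟩ := ih hleg'
        have hUsub : (p (n + 1)).2 ⊆ B (fyQseq r B q₀ n (fun i => p i)) :=
          hleg.2 n le_rfl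
        obtain ⟨hU, hx⟩ := hleg.1 (n + 1) le_rfl
        obtain ⟨q, hq1, hq2⟩ := hbase _ hU _ hx
        obtain ⟨t, ht, h1, h2⟩ := hdir (p (n + 1)).1
          (fyQseq r B q₀ n (fun i => p i)) (hUsub hx) q hq1
        have hprev : fyQseq r B q₀ n
            (fun i : Fin (n + 1) => (fun j : Fin (n + 2) => p j) i.castSucc)
            = fyQseq r B q₀ n (fun i => p i) := rfl
        have hex : ∃ t, ((fun j : Fin (n + 2) => p j) (Fin.last (n + 1))).1 ∈ B t ∧
            B t ⊆ ((fun j : Fin (n + 2) => p j) (Fin.last (n + 1))).2 ∧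
            r (fyQseq r B q₀ n
              (fun i : Fin (n + 1) => (fun j : Fin (n + 2) => p j) i.castSucc)) t := by
          rw [hprev]
          exact ⟨t, ht, (hmono q t h2).trans hq2, h1⟩
        have heq : fyQseq r B q₀ (n + 1) (fun i => p i) = hex.choose := by
          rw [fyQseq, dif_pos hex]
        have hspec := hex.choose_spec
        refine ⟨⟨?_, ?_⟩, fun m hm => ?_⟩
        · rw [heq]; exact hspec.1
        · rw [heq]; exact hspec.2.1
        · rcases Nat.lt_or_ge m n with hmn | hmn
          · exact hchain m hmn
          · have : m = n := by omega
            subst this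
            rw [heq]; exact hspec.2.2
    refine ⟨s, fun p n hleg => ?_, fun p hleg => ?_⟩
    · obtain ⟨⟨h1, h2⟩, -⟩ := key p n hleg
      exact ⟨(hvals _).1, h1, h2⟩
    · set Qs : ℕ → Q := fun n => fyQseq r B q₀ n (fun i => p i) with hQs
      have hchain : ∀ n, r (Qs n) (Qs (n + 1)) :=
        fun n => (key p (n + 1) (hleg (n + 1))).2 n le_rfl
      have hlt : ∀ m n, m < n → r (Qs m) (Qs n) := by
        intro m n
        induction n with
        | zero => intro hmn; exact absurd hmn (by omega)
        | succ n ih =>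
          intro hmn
          rcases Nat.lt_or_ge m n with h' | h'
          · exact htrans (ih h') (hchain n)
          · obtain rfl : m = n := by omega
            exact hchain m
      have hdirD : DirectedOn r (Set.range Qs) := by
        rintro a ⟨m, rfl⟩ b ⟨n, rfl⟩
        exact ⟨Qs (max m n + 1), ⟨max m n + 1, rfl⟩,
          hlt m _ (by omega), hlt n _ (by omega)⟩
      obtain ⟨x, hx⟩ := hcap (Set.range Qs) ⟨Qs 0, 0, rfl⟩
        (Set.countable_range Qs) hdirD
      refine ⟨x, mem_iInter.2 fun n => ?_⟩
      have := (mem_iInter₂.1 hx) (Qs n) ⟨n, rfl⟩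
      exact this
  · refine ⟨fun _ _ => ∅, fun p n _ => absurd ⟨(p 0).1⟩ hX,
      fun p _ => absurd ⟨(p 0).1⟩ hX⟩
end

section
/- The product of any family of weakly α-favorable topological spaces is weakly α-favorable. -/
open Set TopologicalSpace

universe u v

/-! ### Auxiliary development for stmt7 -/

section ProdGame

variable {ι : Type*} (X : ι → Type*) [∀ i, TopologicalSpace (X i)]

lemma exists_box (pt : ∀ i, X i) {O : Set (∀ i, X i)} (ho : IsOpen O) (hne : O.Nonempty) :
    ∃ C : ∀ i, Set (X i), (∀ i, IsOpen (C i)) ∧ (∀ i, (C i).Nonempty) ∧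
      {i | C i ≠ Set.univ}.Finite ∧ Set.univ.pi C ⊆ O := by
  classical
  obtain ⟨f, hf⟩ := hne
  obtain ⟨I, u, hu, hsub⟩ := isOpen_pi_iff.mp ho f hf
  refine ⟨fun i => if i ∈ I then u i else Set.univ, fun i => ?_, fun i => ?_, ?_, ?_⟩
  · by_cases hi : i ∈ I
    · simpa [hi] using (hu i hi).1
    · simp [hi]
  · by_cases hi : i ∈ I
    · exact ⟨f i, by simpa [hi] using (hu i hi).2⟩
    · exact ⟨pt i, by simp [hi]⟩
  · refine I.finite_toSet.subset fun i hi => ?_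
    by_contra hiI
    have hiI' : i ∉ I := fun hmem => hiI hmem
    exact hi (if_neg hiI')
  · intro g hg
    refine hsub fun i hi => ?_
    have hi' : i ∈ I := hi
    simpa [hi'] using hg i (Set.mem_univ i)

open Classical in
/-- Choose a finitely-supported open box inside a nonempty open subset of the product. -/
noncomputable def pickBox (pt : ∀ i, X i) (O : Set (∀ i, X i)) : ∀ i, Set (X i) :=
  if h : IsOpen O ∧ O.Nonempty then (exists_box X pt h.1 h.2).choose else fun _ => Set.univ

lemma pickBox_spec (pt : ∀ i, X i) {O : Set (∀ i, X i)} (ho : IsOpen O) (hne : O.Nonempty) :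
    (∀ i, IsOpen (pickBox X pt O i)) ∧ (∀ i, (pickBox X pt O i).Nonempty) ∧
      {i | pickBox X pt O i ≠ Set.univ}.Finite ∧ Set.univ.pi (pickBox X pt O) ⊆ O := by
  have : pickBox X pt O = (exists_box X pt ho hne).choose := by
    rw [pickBox, dif_pos ⟨ho, hne⟩]
  rw [this]
  exact (exists_box X pt ho hne).choose_spec

open Classical in
/-- α's response in coordinate `i` at stage `n` of the product game. -/
noncomputable def respW (σ : ∀ i, ∀ n : ℕ, (Fin (n + 1) → Set (X i)) → Set (X i))
    (pt : ∀ i, X i) (U : ℕ → Set (∀ i, X i)) (n : ℕ) (i : ι) : Set (X i) :=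
  if _ : ∃ k, k ≤ n ∧ pickBox X pt (U k) i ≠ Set.univ then
    σ i (n - sInf {k | pickBox X pt (U k) i ≠ Set.univ})
      (fun j => pickBox X pt (U (sInf {k | pickBox X pt (U k) i ≠ Set.univ} + (j : ℕ))) i)
  else Set.univ

/-- α's strategy in the product game. -/
noncomputable def prodStrat (σ : ∀ i, ∀ n : ℕ, (Fin (n + 1) → Set (X i)) → Set (X i))
    (pt : ∀ i, X i) : ∀ n : ℕ, (Fin (n + 1) → Set (∀ i, X i)) → Set (∀ i, X i) :=
  fun n h =>
    Set.univ.pi (respW X σ pt (fun k => if hk : k < n + 1 then h ⟨k, hk⟩ else ∅) n)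

lemma respW_congr (σ : ∀ i, ∀ n : ℕ, (Fin (n + 1) → Set (X i)) → Set (X i))
    (pt : ∀ i, X i) {U U' : ℕ → Set (∀ i, X i)} {n : ℕ}
    (hUU : ∀ k ≤ n, U k = U' k) (i : ι) :
    respW X σ pt U n i = respW X σ pt U' n i := by
  classical
  have hB : ∀ k ≤ n, pickBox X pt (U k) i = pickBox X pt (U' k) i := fun k hk => by
    rw [hUU k hk]
  by_cases h : ∃ k, k ≤ n ∧ pickBox X pt (U k) i ≠ Set.univ
  · obtain ⟨k0, hk0, hk0'⟩ := h
    have h : ∃ k, k ≤ n ∧ pickBox X pt (U k) i ≠ Set.univ := ⟨k0, hk0, hk0'⟩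
    have h' : ∃ k, k ≤ n ∧ pickBox X pt (U' k) i ≠ Set.univ :=
      ⟨k0, hk0, by rw [← hB k0 hk0]; exact hk0'⟩
    set S := {k | pickBox X pt (U k) i ≠ Set.univ} with hS
    set S' := {k | pickBox X pt (U' k) i ≠ Set.univ} with hS'
    have hmS : sInf S ≤ n := le_trans (Nat.sInf_le hk0') hk0
    have hmS' : sInf S' ≤ n := le_trans (Nat.sInf_le (h'.choose_spec.2)) (by
      exact le_trans (le_refl _) h'.choose_spec.1)
    have hmem : sInf S ∈ S := Nat.sInf_mem ⟨k0, hk0'⟩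
    have hmem' : sInf S' ∈ S' := Nat.sInf_mem ⟨h'.choose, h'.choose_spec.2⟩
    have hm : sInf S = sInf S' := by
      apply le_antisymm
      · apply Nat.sInf_le
        show pickBox X pt (U (sInf S')) i ≠ Set.univ
        rw [hB _ hmS']; exact hmem'
      · apply Nat.sInf_le
        show pickBox X pt (U' (sInf S)) i ≠ Set.univ
        rw [← hB _ hmS]; exact hmem
    rw [respW, dif_pos h, respW, dif_pos h']
    rw [← hS, ← hS', ← hm]
    have harg : (fun j : Fin (n - sInf S + 1) => pickBox X pt (U (sInf S + (j : ℕ))) i)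
        = fun j : Fin (n - sInf S + 1) => pickBox X pt (U' (sInf S + (j : ℕ))) i := by
      funext j
      exact hB (sInf S + (j : ℕ)) (by have := j.isLt; omega)
    rw [harg]
  · have h' : ¬ ∃ k, k ≤ n ∧ pickBox X pt (U' k) i ≠ Set.univ := by
      rintro ⟨k, hk, hk'⟩
      exact h ⟨k, hk, by rw [hB k hk]; exact hk'⟩
    rw [respW, dif_neg h, respW, dif_neg h']

lemma bmResp_prodStrat (σ : ∀ i, ∀ n : ℕ, (Fin (n + 1) → Set (X i)) → Set (X i))
    (pt : ∀ i, X i) (U : ℕ → Set (∀ i, X i)) (n : ℕ) :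
    bmResp (prodStrat X σ pt) U n = Set.univ.pi (respW X σ pt U n) := by
  show Set.univ.pi
      (respW X σ pt (fun k => if hk : k < n + 1 then U (((⟨k, hk⟩ : Fin (n+1)) : ℕ)) else ∅) n)
      = _
  have : (respW X σ pt (fun k => if hk : k < n + 1 then U (((⟨k, hk⟩ : Fin (n+1)) : ℕ)) else ∅) n)
      = respW X σ pt U n := by
    funext i
    refine respW_congr X σ pt (fun k hk => ?_) i
    simp [Nat.lt_succ_of_le hk]
  rw [this]

lemma isOpen_univ_pi_of_finite {C : ∀ i, Set (X i)} (hF : {i | C i ≠ Set.univ}.Finite)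
    (hC : ∀ i, IsOpen (C i)) : IsOpen (Set.univ.pi C) := by
  have : Set.univ.pi C = Set.pi {i | C i ≠ Set.univ} C := by
    ext f
    simp only [Set.mem_pi, Set.mem_univ, true_implies, Set.mem_setOf_eq]
    constructor
    · exact fun hf i _ => hf i
    · intro hf i
      by_cases hi : C i = Set.univ
      · rw [hi]; trivial
      · exact hf i hi
  rw [this]
  exact isOpen_set_pi hF fun i _ => hC i

lemma pi_coord_subset {C D : ∀ i, Set (X i)} (hC : ∀ i, (C i).Nonempty)
    (h : Set.univ.pi C ⊆ Set.univ.pi D) (i : ι) : C i ⊆ D i := by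
  rcases Set.univ_pi_subset_univ_pi_iff.mp h with h1 | ⟨j, hj⟩
  · exact h1 i
  · exact absurd hj (hC j).ne_empty

lemma respW_active (σ : ∀ i, ∀ n : ℕ, (Fin (n + 1) → Set (X i)) → Set (X i))
    (pt : ∀ i, X i) (U : ℕ → Set (∀ i, X i)) (n : ℕ) (i : ι)
    (hact : ∃ k, k ≤ n ∧ pickBox X pt (U k) i ≠ Set.univ) :
    respW X σ pt U n i =
      bmResp (σ i)
        (fun t => pickBox X pt (U (sInf {k | pickBox X pt (U k) i ≠ Set.univ} + t)) i)
        (n - sInf {k | pickBox X pt (U k) i ≠ Set.univ}) := by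
  rw [respW, dif_pos hact]
  rfl

lemma coord_legal (σ : ∀ i, ∀ n : ℕ, (Fin (n + 1) → Set (X i)) → Set (X i))
    (pt : ∀ i, X i) (U : ℕ → Set (∀ i, X i)) (n : ℕ)
    (hleg : bmLegal (prodStrat X σ pt) U n) (i : ι)
    (hact : ∃ k, k ≤ n ∧ pickBox X pt (U k) i ≠ Set.univ) :
    bmLegal (σ i)
      (fun t => pickBox X pt (U (sInf {k | pickBox X pt (U k) i ≠ Set.univ} + t)) i)
      (n - sInf {k | pickBox X pt (U k) i ≠ Set.univ}) := by
  set m := sInf {k | pickBox X pt (U k) i ≠ Set.univ} with hmdef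
  obtain ⟨k0, hk0n, hk0⟩ := hact
  have hm_le : m ≤ n := le_trans (Nat.sInf_le hk0) hk0n
  constructor
  · intro t ht
    have h1 : m + t ≤ n := by omega
    have hU := hleg.1 (m + t) h1
    have hspec := pickBox_spec X pt hU.1 hU.2
    exact ⟨hspec.1 i, hspec.2.1 i⟩
  · intro t ht
    have h1 : m + (t + 1) ≤ n := by omega
    have hU := hleg.1 (m + (t + 1)) h1
    have hspec := pickBox_spec X pt hU.1 hU.2
    have hsub : Set.univ.pi (pickBox X pt (U (m + (t + 1)))) ⊆
        Set.univ.pi (respW X σ pt U (m + t)) := by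
      refine subset_trans hspec.2.2.2 ?_
      have h2 := hleg.2 (m + t) (by omega)
      rw [bmResp_prodStrat] at h2
      exact h2
    have hcoord := pi_coord_subset X hspec.2.1 hsub i
    have hmem0 : pickBox X pt (U m) i ≠ Set.univ := by
      rw [hmdef]
      exact Nat.sInf_mem (s := {k | pickBox X pt (U k) i ≠ Set.univ}) ⟨k0, hk0⟩
    have hact' : ∃ k, k ≤ m + t ∧ pickBox X pt (U k) i ≠ Set.univ :=
      ⟨m, Nat.le_add_right _ _, hmem0⟩
    rw [respW_active X σ pt U (m + t) i hact', ← hmdef] at hcoord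
    simpa [Nat.add_sub_cancel_left] using hcoord

lemma prodStrat_clause1 (σ : ∀ i, ∀ n : ℕ, (Fin (n + 1) → Set (X i)) → Set (X i))
    (pt : ∀ i, X i) (hσ : ∀ i, IsBMWinning (σ i)) (U : ℕ → Set (∀ i, X i)) (n : ℕ)
    (hleg : bmLegal (prodStrat X σ pt) U n) :
    IsOpen (bmResp (prodStrat X σ pt) U n) ∧ (bmResp (prodStrat X σ pt) U n).Nonempty ∧
      bmResp (prodStrat X σ pt) U n ⊆ U n := by
  classical
  have hUn := hleg.1 n le_rfl
  have hspecn := pickBox_spec X pt hUn.1 hUn.2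
  have key : ∀ i, IsOpen (respW X σ pt U n i) ∧ (respW X σ pt U n i).Nonempty ∧
      respW X σ pt U n i ⊆ pickBox X pt (U n) i := by
    intro i
    by_cases hact : ∃ k, k ≤ n ∧ pickBox X pt (U k) i ≠ Set.univ
    · set m := sInf {k | pickBox X pt (U k) i ≠ Set.univ} with hmdef
      obtain ⟨k0, hk0n, hk0⟩ := hact
      have hact : ∃ k, k ≤ n ∧ pickBox X pt (U k) i ≠ Set.univ := ⟨k0, hk0n, hk0⟩
      have hm_le : m ≤ n := le_trans (Nat.sInf_le hk0) hk0n
      have hlegi := coord_legal X σ pt U n hleg i hact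
      rw [← hmdef] at hlegi
      have hwin := (hσ i).1 (fun t => pickBox X pt (U (m + t)) i) (n - m) hlegi
      rw [respW_active X σ pt U n i hact, ← hmdef]
      refine ⟨hwin.1, hwin.2.1, ?_⟩
      have h22 := hwin.2.2
      simp only [Nat.add_sub_cancel' hm_le] at h22
      exact h22
    · rw [respW, dif_neg hact]
      refine ⟨isOpen_univ, ⟨pt i, Set.mem_univ _⟩, ?_⟩
      have hpb : pickBox X pt (U n) i = Set.univ := by
        by_contra hne'
        exact hact ⟨n, le_rfl, hne'⟩
      rw [hpb]
  rw [bmResp_prodStrat]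
  refine ⟨?_, ?_, ?_⟩
  · refine isOpen_univ_pi_of_finite X ?_ fun i => (key i).1
    have hsub : {i | respW X σ pt U n i ≠ Set.univ} ⊆
        ⋃ k ∈ Finset.range (n + 1), {i | pickBox X pt (U k) i ≠ Set.univ} := by
      intro i hi
      by_contra hnot
      apply hi
      rw [respW, dif_neg]
      rintro ⟨k, hk, hk'⟩
      exact hnot (Set.mem_biUnion (Finset.mem_range.mpr (by omega)) hk')
    refine Set.Finite.subset ?_ hsub
    refine Set.Finite.biUnion (Finset.finite_toSet _) ?_
    intro k hk
    have hk' : k ≤ n := by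
      have := Finset.mem_range.mp hk
      omega
    have hU := hleg.1 k hk'
    exact (pickBox_spec X pt hU.1 hU.2).2.2.1
  · rw [Set.univ_pi_nonempty_iff]
    exact fun i => (key i).2.1
  · refine subset_trans ?_ hspecn.2.2.2
    exact Set.pi_mono fun i _ => (key i).2.2

lemma prodStrat_clause2 (σ : ∀ i, ∀ n : ℕ, (Fin (n + 1) → Set (X i)) → Set (X i))
    (pt : ∀ i, X i) (hσ : ∀ i, IsBMWinning (σ i)) (U : ℕ → Set (∀ i, X i))
    (hleg : ∀ n, bmLegal (prodStrat X σ pt) U n) :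
    (⋂ n, bmResp (prodStrat X σ pt) U n).Nonempty := by
  classical
  have key : ∀ i, ∃ y : X i, ∀ n, y ∈ respW X σ pt U n i := by
    intro i
    by_cases hact : ∃ k, pickBox X pt (U k) i ≠ Set.univ
    · set m := sInf {k | pickBox X pt (U k) i ≠ Set.univ} with hmdef
      have hmem : pickBox X pt (U m) i ≠ Set.univ := by
        rw [hmdef]
        exact Nat.sInf_mem (s := {k | pickBox X pt (U k) i ≠ Set.univ}) hact
      have hlegM : ∀ t, bmLegal (σ i) (fun t' => pickBox X pt (U (m + t')) i) t := by
        intro t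
        have hC := coord_legal X σ pt U (m + t) (hleg (m + t)) i
          ⟨m, Nat.le_add_right _ _, hmem⟩
        rw [← hmdef] at hC
        simpa [Nat.add_sub_cancel_left] using hC
      obtain ⟨y, hy⟩ := (hσ i).2 _ hlegM
      refine ⟨y, fun n => ?_⟩
      by_cases hactn : ∃ k, k ≤ n ∧ pickBox X pt (U k) i ≠ Set.univ
      · rw [respW_active X σ pt U n i hactn, ← hmdef]
        exact Set.mem_iInter.mp hy (n - m)
      · rw [respW, dif_neg hactn]
        trivial
    · refine ⟨pt i, fun n => ?_⟩
      rw [respW, dif_neg (by rintro ⟨k, _, hk⟩; exact hact ⟨k, hk⟩)]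
      trivial
  choose y hy using key
  refine ⟨y, Set.mem_iInter.mpr fun n => ?_⟩
  rw [bmResp_prodStrat]
  exact fun i _ => hy i n

end ProdGame

/-- products of weakly α-favorable spaces are weakly α-favorable. -/
theorem stmt7 {ι : Type*} (X : ι → Type*) [∀ i, TopologicalSpace (X i)]
    (h : ∀ i, WeaklyAlphaFavorable (X i)) :
    WeaklyAlphaFavorable (∀ i, X i) := by
  classical
  by_cases hne : Nonempty (∀ i, X i)
  · obtain ⟨pt⟩ := hne
    choose σ hσ using h
    exact ⟨prodStrat X σ pt,
      fun U n hleg => prodStrat_clause1 X σ pt hσ U n hleg,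
      fun U hleg => prodStrat_clause2 X σ pt hσ U hleg⟩
  · refine ⟨fun _ _ => ∅, ?_, ?_⟩
    · intro U n hleg
      obtain ⟨x, -⟩ := (hleg.1 0 (Nat.zero_le _)).2
      exact absurd ⟨x⟩ hne
    · intro U hleg
      obtain ⟨x, -⟩ := ((hleg 0).1 0 le_rfl).2
      exact absurd ⟨x⟩ hne
end

section
/- The space σ({0,1}^{ω₁}) of all points of the Cantor cube {0,1}^{ω₁} with countable support, equipped with the ω₁-box topology generated by the sets pr_A^{-1}(x) for countable A ⊆ ω₁ and x ∈ {0,1}^A, is F-Y countably domain representable. -/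
open Set TopologicalSpace

universe u v

namespace Stmt11

attribute [local instance] Classical.propDecidable

/-- A code for a countable partial function from `I` to `Bool`, via an injection
`ι : I → (ℕ → Bool)`. -/
structure Code : Type where
  e : ℕ → Option (ℕ → Bool)
  g : ℕ → Bool

variable {I : Type v}

/-- The partial function decoded from a code. -/
noncomputable def Fn (ι : I → ℕ → Bool) (q : Code) (a : I) : Option Bool :=
  if h : ∃ n, q.e n = some (ι a) then some (q.g (Nat.find h)) else none

/-- A code is consistent if it never prescribes two different values at a point. -/
def Consistent (ι : I → ℕ → Bool) (q : Code) : Prop :=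
  ∀ n m (a : I), q.e n = some (ι a) → q.e m = some (ι a) → q.g n = q.g m

/-- The open set determined by a code. -/
def Bset (ι : I → ℕ → Bool) (q : Code) : Set (Sigma01 I) :=
  {y | ∀ a b, Fn ι q a = some b → y.1 a = b}

lemma fn_eq (ι : I → ℕ → Bool) {q : Code} (hq : Consistent ι q) {n : ℕ} {a : I}
    (h : q.e n = some (ι a)) : Fn ι q a = some (q.g n) := by
  have hh : ∃ m, q.e m = some (ι a) := ⟨n, h⟩
  rw [Fn, dif_pos hh]
  exact congrArg some (hq _ _ a (Nat.find_spec hh) h)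

lemma fn_dom {ι : I → ℕ → Bool} {q : Code} {a : I} {b : Bool} (h : Fn ι q a = some b) :
    ∃ n, q.e n = some (ι a) := by
  by_contra hc
  rw [Fn, dif_neg hc] at h
  exact absurd h (by simp)

lemma dom_countable {ι : I → ℕ → Bool} (hι : Function.Injective ι) (q : Code) :
    {a : I | ∃ n, q.e n = some (ι a)}.Countable := by
  rw [Set.countable_iff_exists_injective]
  refine ⟨fun a => Nat.find a.2, fun a a' hf => ?_⟩
  have hf' : Nat.find a.2 = Nat.find a'.2 := hf
  have h1 := Nat.find_spec a.2
  have h2 := Nat.find_spec a'.2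
  rw [hf', h2] at h1
  exact Subtype.ext (hι (Option.some.inj h1)).symm

/-- The canonical point of a code: value `b` where `Fn` prescribes `b`, `false` elsewhere. -/
noncomputable def pt (ι : I → ℕ → Bool) (hι : Function.Injective ι) (T : Code) : Sigma01 I :=
  ⟨fun a => (Fn ι T a).getD false, by
    refine (dom_countable hι T).mono fun a ha => ?_
    simp only [Set.mem_setOf_eq] at ha ⊢
    rcases ho : Fn ι T a with _ | b
    · rw [ho] at ha; simp at ha
    · exact fn_dom ho⟩

lemma pt_mem {ι : I → ℕ → Bool} (hι : Function.Injective ι) {T q : Code}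
    (h : ∀ a b, Fn ι q a = some b → Fn ι T a = some b) : pt ι hι T ∈ Bset ι q := by
  intro a b hb
  have := h a b hb
  simp [pt, this]

lemma bset_open {ι : I → ℕ → Bool} (hι : Function.Injective ι) (q : Code) :
    IsOpen (Bset ι q) := by
  have heq : Bset ι q =
      basicSet I {a : I | ∃ n, q.e n = some (ι a)} (fun a => (Fn ι q a).getD false) := by
    ext y
    constructor
    · intro hy a ha
      have hh : ∃ m, q.e m = some (ι a) := ha
      have hfe : Fn ι q a = some (q.g (Nat.find hh)) := by rw [Fn, dif_pos hh]
      show y.1 a = (Fn ι q a).getD false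
      rw [hfe, Option.getD_some]
      exact hy a _ hfe
    · intro hy a b hb
      have hd : ∃ n, q.e n = some (ι a) := fn_dom hb
      have := hy a hd
      simp only [hb, Option.getD_some] at this
      exact this
  rw [heq]
  exact TopologicalSpace.GenerateOpen.basic _
    ⟨_, _, dom_countable hι q, rfl⟩

/-- Every open set contains, around each of its points `x`, a basic set of the form
`basicSet A x.1` with `A` countable. -/
lemma exists_basic {U : Set (Sigma01 I)} (hU : IsOpen U) {x : Sigma01 I} (hx : x ∈ U) :
    ∃ A : Set I, A.Countable ∧ basicSet I A x.1 ⊆ U := by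
  induction hU with
  | basic V hV =>
    obtain ⟨A, f, hA, rfl⟩ := hV
    refine ⟨A, hA, fun y hy a ha => ?_⟩
    rw [hy a ha]; exact hx a ha
  | univ => exact ⟨∅, Set.countable_empty, fun _ _ => trivial⟩
  | inter V W hV hW ihV ihW =>
    obtain ⟨A₁, hA₁, hs₁⟩ := ihV hx.1
    obtain ⟨A₂, hA₂, hs₂⟩ := ihW hx.2
    exact ⟨A₁ ∪ A₂, hA₁.union hA₂,
      fun y hy => ⟨hs₁ fun a ha => hy a (Or.inl ha), hs₂ fun a ha => hy a (Or.inr ha)⟩⟩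
  | sUnion S hS ih =>
    obtain ⟨V, hVS, hxV⟩ := hx
    obtain ⟨A, hA, hs⟩ := ih V hVS hxV
    exact ⟨A, hA, fun y hy => ⟨V, hVS, hs hy⟩⟩

/-- The code with moves enumerated by `v`, values given by `x`. -/
def baseCode (ι : I → ℕ → Bool) (v : ℕ → I) (x : Sigma01 I) : Code :=
  ⟨fun n => some (ι (v n)), fun n => x.1 (v n)⟩

lemma baseCode_consistent {ι : I → ℕ → Bool} (hι : Function.Injective ι) (v : ℕ → I)
    (x : Sigma01 I) : Consistent ι (baseCode ι v x) := by
  intro n m a hn hm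
  have hn' : v n = a := hι (Option.some.inj hn)
  have hm' : v m = a := hι (Option.some.inj hm)
  show x.1 (v n) = x.1 (v m)
  rw [hn', hm']

/-- A code representing the constraint "agree with `x` on `A`", for countable `A`. -/
lemma exists_code {ι : I → ℕ → Bool} (hι : Function.Injective ι) (A : Set I)
    (hA : A.Countable) (x : Sigma01 I) :
    ∃ q : Code, Consistent ι q ∧ x ∈ Bset ι q ∧ Bset ι q ⊆ basicSet I A x.1 := by
  rcases A.eq_empty_or_nonempty with rfl | hne
  · refine ⟨⟨fun _ => none, fun _ => false⟩, ?_, ?_, ?_⟩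
    · intro n m a h; exact absurd h (by simp)
    · intro a b hb
      exact absurd (fn_dom hb) (by simp)
    · intro y _ a ha; exact absurd ha (Set.notMem_empty a)
  · obtain ⟨v, rfl⟩ := hA.exists_eq_range hne
    have hc := baseCode_consistent hι v x
    refine ⟨baseCode ι v x, hc, ?_, ?_⟩
    · intro a b hb
      obtain ⟨n, hn⟩ := fn_dom hb
      have hn' : v n = a := hι (Option.some.inj hn)
      have hfe : Fn ι (baseCode ι v x) a = some (x.1 (v n)) := fn_eq ι hc hn
      rw [hfe] at hb
      rw [← Option.some.inj hb, hn']
    · intro y hy a ha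
      obtain ⟨n, rfl⟩ := ha
      exact hy (v n) (x.1 (v n)) (fn_eq ι hc rfl)

/-- Merge two codes by interleaving. -/
def merge2 (p q : Code) : Code :=
  ⟨fun n => if n % 2 = 0 then p.e (n / 2) else q.e (n / 2),
   fun n => if n % 2 = 0 then p.g (n / 2) else q.g (n / 2)⟩

lemma merge2_e_even (p q : Code) (k : ℕ) : (merge2 p q).e (2 * k) = p.e k := by
  show (if 2 * k % 2 = 0 then p.e (2 * k / 2) else q.e (2 * k / 2)) = p.e k
  rw [if_pos (by omega), Nat.mul_div_cancel_left k (by norm_num)]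

lemma merge2_g_even (p q : Code) (k : ℕ) : (merge2 p q).g (2 * k) = p.g k := by
  show (if 2 * k % 2 = 0 then p.g (2 * k / 2) else q.g (2 * k / 2)) = p.g k
  rw [if_pos (by omega), Nat.mul_div_cancel_left k (by norm_num)]

lemma merge2_e_odd (p q : Code) (k : ℕ) : (merge2 p q).e (2 * k + 1) = q.e k := by
  show (if (2 * k + 1) % 2 = 0 then p.e ((2 * k + 1) / 2) else q.e ((2 * k + 1) / 2)) = q.e k
  rw [if_neg (by omega)]
  congr 1
  omega

lemma merge2_g_odd (p q : Code) (k : ℕ) : (merge2 p q).g (2 * k + 1) = q.g k := by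
  show (if (2 * k + 1) % 2 = 0 then p.g ((2 * k + 1) / 2) else q.g ((2 * k + 1) / 2)) = q.g k
  rw [if_neg (by omega)]
  congr 1
  omega

lemma merge2_val {ι : I → ℕ → Bool} {p q : Code} (hp : Consistent ι p) (hq : Consistent ι q)
    {x : Sigma01 I} (hxp : x ∈ Bset ι p) (hxq : x ∈ Bset ι q) :
    ∀ n (a : I), (merge2 p q).e n = some (ι a) → (merge2 p q).g n = x.1 a := by
  intro n a hn
  rcases Nat.even_or_odd n with he | ho
  · obtain ⟨k, hk⟩ := he
    have hk' : n = 2 * k := by omega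
    subst hk'
    rw [merge2_e_even] at hn
    rw [merge2_g_even]
    exact (hxp a _ (fn_eq ι hp hn)).symm
  · obtain ⟨k, hk⟩ := ho
    subst hk
    rw [merge2_e_odd] at hn
    rw [merge2_g_odd]
    exact (hxq a _ (fn_eq ι hq hn)).symm

lemma merge2_consistent {ι : I → ℕ → Bool} {p q : Code} (hp : Consistent ι p)
    (hq : Consistent ι q) {x : Sigma01 I} (hxp : x ∈ Bset ι p) (hxq : x ∈ Bset ι q) :
    Consistent ι (merge2 p q) := by
  intro n m a hn hm
  rw [merge2_val hp hq hxp hxq n a hn, merge2_val hp hq hxp hxq m a hm]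

lemma merge2_mem {ι : I → ℕ → Bool} {p q : Code} (hp : Consistent ι p)
    (hq : Consistent ι q) {x : Sigma01 I} (hxp : x ∈ Bset ι p) (hxq : x ∈ Bset ι q) :
    x ∈ Bset ι (merge2 p q) := by
  intro a b hb
  obtain ⟨n, hn⟩ := fn_dom hb
  have h1 : Fn ι (merge2 p q) a = some ((merge2 p q).g n) :=
    fn_eq ι (merge2_consistent hp hq hxp hxq) hn
  rw [h1] at hb
  rw [← Option.some.inj hb]
  exact (merge2_val hp hq hxp hxq n a hn).symm

lemma merge2_left {ι : I → ℕ → Bool} {p q : Code} (hp : Consistent ι p)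
    (hc : Consistent ι (merge2 p q)) :
    ∀ a b, Fn ι p a = some b → Fn ι (merge2 p q) a = some b := by
  intro a b hb
  obtain ⟨n, hn⟩ := fn_dom hb
  have h1 : Fn ι p a = some (p.g n) := fn_eq ι hp hn
  rw [h1] at hb
  have he : (merge2 p q).e (2 * n) = some (ι a) := by rw [merge2_e_even]; exact hn
  have h2 : Fn ι (merge2 p q) a = some ((merge2 p q).g (2 * n)) := fn_eq ι hc he
  rw [merge2_g_even] at h2
  rw [h2]
  exact hb

lemma merge2_right {ι : I → ℕ → Bool} {p q : Code} (hq : Consistent ι q)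
    (hc : Consistent ι (merge2 p q)) :
    ∀ a b, Fn ι q a = some b → Fn ι (merge2 p q) a = some b := by
  intro a b hb
  obtain ⟨n, hn⟩ := fn_dom hb
  have h1 : Fn ι q a = some (q.g n) := fn_eq ι hq hn
  rw [h1] at hb
  have he : (merge2 p q).e (2 * n + 1) = some (ι a) := by rw [merge2_e_odd]; exact hn
  have h2 : Fn ι (merge2 p q) a = some ((merge2 p q).g (2 * n + 1)) := fn_eq ι hc he
  rw [merge2_g_odd] at h2
  rw [h2]
  exact hb

/-- Merge a sequence of codes via the pairing function. -/
def mergeSeq (u : ℕ → Code) : Code :=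
  ⟨fun k => (u k.unpair.1).e k.unpair.2, fun k => (u k.unpair.1).g k.unpair.2⟩

lemma mergeSeq_e (u : ℕ → Code) (n m : ℕ) :
    (mergeSeq u).e (Nat.pair n m) = (u n).e m := by
  show (u (Nat.pair n m).unpair.1).e (Nat.pair n m).unpair.2 = (u n).e m
  rw [Nat.unpair_pair]

lemma mergeSeq_g (u : ℕ → Code) (n m : ℕ) :
    (mergeSeq u).g (Nat.pair n m) = (u n).g m := by
  show (u (Nat.pair n m).unpair.1).g (Nat.pair n m).unpair.2 = (u n).g m
  rw [Nat.unpair_pair]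

lemma mergeSeq_consistent {ι : I → ℕ → Bool} (u : ℕ → Code)
    (hcons : ∀ n, Consistent ι (u n))
    (hdir : ∀ n m, ∃ t : Code,
      (∀ a b, Fn ι (u n) a = some b → Fn ι t a = some b) ∧
      (∀ a b, Fn ι (u m) a = some b → Fn ι t a = some b)) :
    Consistent ι (mergeSeq u) := by
  intro k k' a hk hk'
  have hk1 : (u k.unpair.1).e k.unpair.2 = some (ι a) := hk
  have hk2 : (u k'.unpair.1).e k'.unpair.2 = some (ι a) := hk'
  have f1 : Fn ι (u k.unpair.1) a = some ((u k.unpair.1).g k.unpair.2) :=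
    fn_eq ι (hcons _) hk1
  have f2 : Fn ι (u k'.unpair.1) a = some ((u k'.unpair.1).g k'.unpair.2) :=
    fn_eq ι (hcons _) hk2
  obtain ⟨t, ht1, ht2⟩ := hdir k.unpair.1 k'.unpair.1
  have g1 := ht1 a _ f1
  have g2 := ht2 a _ f2
  rw [g2] at g1
  show (u k.unpair.1).g k.unpair.2 = (u k'.unpair.1).g k'.unpair.2
  exact (Option.some.inj g1).symm

lemma mergeSeq_le {ι : I → ℕ → Bool} (u : ℕ → Code)
    (hcons : ∀ n, Consistent ι (u n)) (hc : Consistent ι (mergeSeq u)) (n : ℕ) :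
    ∀ a b, Fn ι (u n) a = some b → Fn ι (mergeSeq u) a = some b := by
  intro a b hb
  obtain ⟨m, hm⟩ := fn_dom hb
  have h1 : Fn ι (u n) a = some ((u n).g m) := fn_eq ι (hcons n) hm
  rw [h1] at hb
  have he : (mergeSeq u).e (Nat.pair n m) = some (ι a) := by rw [mergeSeq_e]; exact hm
  have h2 : Fn ι (mergeSeq u) a = some ((mergeSeq u).g (Nat.pair n m)) := fn_eq ι hc he
  rw [mergeSeq_g] at h2
  rw [h2]
  exact hb

end Stmt11

/-- σ({0,1}^{ω₁}) with the ω₁-box topology is F-Y countably domain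
representable. -/
theorem stmt11 {I : Type v} (hI : Cardinal.mk I = Cardinal.aleph 1) :
    FYCountablyDomainRep.{u} (Sigma01 I) := by
  classical
  -- obtain an injection of `I` into `ℕ → Bool`
  have hle : Cardinal.mk I ≤ Cardinal.mk (ULift.{v} (ℕ → Bool)) := by
    have h1 : Cardinal.mk (ULift.{v} (ℕ → Bool)) = Cardinal.continuum := by
      rw [Cardinal.mk_uLift, ← Cardinal.power_def, Cardinal.mk_bool, Cardinal.mk_nat,
        Cardinal.two_power_aleph0, Cardinal.lift_continuum]
    rw [hI, h1]
    exact Cardinal.aleph_one_le_continuum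
  obtain ⟨f⟩ := (Cardinal.le_def _ _).mp hle
  set ι : I → ℕ → Bool := fun a => (f a).down with hιdef
  have hι : Function.Injective ι := fun a b h => f.injective (ULift.down_injective h)
  refine ⟨ULift.{u} {c : Stmt11.Code // Stmt11.Consistent ι c},
    fun p q => ∀ a b, Stmt11.Fn ι p.down.1 a = some b → Stmt11.Fn ι q.down.1 a = some b,
    fun q => Stmt11.Bset ι q.down.1, ?_, ?_, ?_, ?_, ?_, ?_⟩
  · exact fun q => ⟨Stmt11.bset_open hι _,
      ⟨Stmt11.pt ι hι q.down.1, Stmt11.pt_mem hι (fun a b h => h)⟩⟩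
  · intro U hU x hx
    obtain ⟨A, hA, hAU⟩ := Stmt11.exists_basic hU hx
    obtain ⟨c, hc, hxc, hsub⟩ := Stmt11.exists_code hι A hA x
    exact ⟨⟨⟨c, hc⟩⟩, hxc, hsub.trans hAU⟩
  · intro p q t h1 h2 a b hb
    exact h2 a b (h1 a b hb)
  · intro p q hpq y hy a b hb
    exact hy a b (hpq a b hb)
  · intro x p hp q hq
    have hcons := Stmt11.merge2_consistent p.down.2 q.down.2 hp hq
    exact ⟨⟨⟨Stmt11.merge2 p.down.1 q.down.1, hcons⟩⟩,
      Stmt11.merge2_mem p.down.2 q.down.2 hp hq,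
      Stmt11.merge2_left p.down.2 hcons, Stmt11.merge2_right q.down.2 hcons⟩
  · intro D hne hct hdir
    obtain ⟨u, hu⟩ := hct.exists_eq_range hne
    set w : ℕ → Stmt11.Code := fun n => (u n).down.1 with hw
    have hmem : ∀ n, u n ∈ D := fun n => hu ▸ Set.mem_range_self n
    have hcons : ∀ n, Stmt11.Consistent ι (w n) := fun n => (u n).down.2
    have hdir' : ∀ n m, ∃ t : Stmt11.Code,
        (∀ a b, Stmt11.Fn ι (w n) a = some b → Stmt11.Fn ι t a = some b) ∧
        (∀ a b, Stmt11.Fn ι (w m) a = some b → Stmt11.Fn ι t a = some b) := by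
      intro n m
      obtain ⟨t, _, ht1, ht2⟩ := hdir (u n) (hmem n) (u m) (hmem m)
      exact ⟨t.down.1, ht1, ht2⟩
    have hTc : Stmt11.Consistent ι (Stmt11.mergeSeq w) :=
      Stmt11.mergeSeq_consistent w hcons hdir'
    refine ⟨Stmt11.pt ι hι (Stmt11.mergeSeq w), ?_⟩
    rw [Set.mem_iInter₂]
    intro q hq
    rw [hu] at hq
    obtain ⟨n, rfl⟩ := hq
    exact Stmt11.pt_mem hι (Stmt11.mergeSeq_le w hcons hTc n)
end

section
/- The space σ({0,1}^{ω₁}) with the ω₁-box topology is not F-Y π-domain representable. -/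
open Set TopologicalSpace

universe u v

/-! ### Auxiliary lemmas -/

lemma sigma01_nonempty (I : Type v) : Nonempty (Sigma01 I) :=
  ⟨⟨fun _ => false, by simp⟩⟩

lemma sigma01_nbhd {I : Type v} {U : Set (Sigma01 I)} (hU : IsOpen U) :
    ∀ x ∈ U, ∃ A : Set I, A.Countable ∧
      ∀ y : Sigma01 I, (∀ a ∈ A, y.1 a = x.1 a) → y ∈ U := by
  have h : TopologicalSpace.GenerateOpen
      {U | ∃ (A : Set I) (f : I → Bool), A.Countable ∧ U = basicSet I A f} U := hU
  clear hU
  induction h with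
  | basic U hU =>
    obtain ⟨A, f, hA, rfl⟩ := hU
    intro x hx
    exact ⟨A, hA, fun y hy a ha => (hy a ha).trans (hx a ha)⟩
  | univ =>
    intro x _
    exact ⟨∅, countable_empty, fun y _ => mem_univ y⟩
  | inter U V _ _ ihU ihV =>
    intro x hx
    obtain ⟨A, hA, hAs⟩ := ihU x hx.1
    obtain ⟨A', hA', hA's⟩ := ihV x hx.2
    exact ⟨A ∪ A', hA.union hA', fun y hy =>
      ⟨hAs y (fun a ha => hy a (Or.inl ha)), hA's y (fun a ha => hy a (Or.inr ha))⟩⟩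
  | sUnion S _ ih =>
    intro x hx
    obtain ⟨t, htS, hxt⟩ := hx
    obtain ⟨A, hA, hAs⟩ := ih t htS x hxt
    exact ⟨A, hA, fun y hy => ⟨t, htS, hAs y hy⟩⟩

lemma basicSet_isOpen {I : Type v} {A : Set I} (hA : A.Countable) (f : I → Bool) :
    IsOpen (basicSet I A f) :=
  TopologicalSpace.GenerateOpen.basic _ ⟨A, f, hA, rfl⟩

lemma basicSet_nonempty {I : Type v} {A : Set I} (hA : A.Countable) (f : I → Bool) :
    (basicSet I A f).Nonempty := by
  classical
  refine ⟨⟨fun a => if a ∈ A then f a else false, ?_⟩, ?_⟩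
  · refine hA.mono ?_
    intro a ha
    simp only [mem_setOf_eq] at ha
    by_contra h
    simp [h] at ha
  · intro a ha
    simp [ha]

/-- One step of the construction: given a countable set `E ⊆ Q` whose `B`-values have a
common point, produce a countable directed superset forcing a fresh coordinate to `1`. -/
lemma step_exists {I : Type v} (hI : Cardinal.mk I = Cardinal.aleph 1)
    {Q : Type u} {r : Q → Q → Prop} {B : Q → Set (Sigma01 I)}
    (hB : ∀ q, IsOpen (B q) ∧ (B q).Nonempty)
    (hpi : ∀ U : Set (Sigma01 I), IsOpen U → U.Nonempty → ∃ q, B q ⊆ U)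
    (htr : Transitive r)
    (hmono : ∀ p q, r p q → B q ⊆ B p)
    (hpair : ∀ p q, (B p ∩ B q).Nonempty → ∃ t, r p t ∧ r q t)
    (E : Set Q) :
    ∃ P : Set Q × I, E.Countable → (⋂ q ∈ E, B q).Nonempty →
      (E ⊆ P.1 ∧ P.1.Countable ∧ P.1.Nonempty ∧ DirectedOn r P.1 ∧
      (∃ q ∈ P.1, B q ⊆ {y : Sigma01 I | y.1 P.2 = true}) ∧
      (∀ b, (∃ q ∈ E, B q ⊆ {y : Sigma01 I | y.1 b = true}) → b ≠ P.2)) := by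
  classical
  haveI : Nonempty I := by
    rw [← Cardinal.mk_ne_zero_iff, hI]
    exact (Cardinal.aleph0_pos.trans Cardinal.aleph0_lt_aleph_one).ne'
  by_cases hEc : E.Countable
  swap
  · exact ⟨(E, Classical.arbitrary I), fun h => absurd h hEc⟩
  by_cases hne : (⋂ q ∈ E, B q).Nonempty
  swap
  · exact ⟨(E, Classical.arbitrary I), fun _ h => absurd h hne⟩
  obtain ⟨x, hx⟩ := hne
  have hxq : ∀ q ∈ E, x ∈ B q := fun q hq => mem_iInter₂.mp hx q hq
  haveI := hEc.to_subtype
  -- choose basic neighborhoods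
  have hA : ∀ q : E, ∃ A : Set I, A.Countable ∧
      ∀ y : Sigma01 I, (∀ a ∈ A, y.1 a = x.1 a) → y ∈ B q.1 :=
    fun q => sigma01_nbhd (hB q.1).1 x (hxq q.1 q.2)
  choose A hAc hAs using hA
  -- a fresh coordinate
  set S : Set I := (⋃ q : E, A q) ∪ {a | x.1 a = true} with hS
  have hSc : S.Countable := (countable_iUnion hAc).union x.2
  have hfresh : ∃ b : I, b ∉ S := by
    by_contra h
    push_neg at h
    have : (univ : Set I).Countable := by
      refine hSc.mono ?_
      intro a _
      exact h a
    have hci : Countable I := Set.countable_univ_iff.mp this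
    have : (Cardinal.mk I) ≤ Cardinal.aleph0 := Cardinal.mk_le_aleph0
    rw [hI] at this
    exact absurd this (Cardinal.aleph0_lt_aleph_one).not_ge
  obtain ⟨b, hb⟩ := hfresh
  have hbA : b ∉ ⋃ q : E, A q := fun h => hb (Or.inl h)
  -- the basic open set forcing coordinate b
  set W : Set I := insert b (⋃ q : E, A q) with hW
  have hWc : W.Countable := ((countable_iUnion hAc).insert b)
  set f : I → Bool := Function.update x.1 b true with hf
  set V : Set (Sigma01 I) := basicSet I W f with hV
  have hVopen : IsOpen V := basicSet_isOpen hWc f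
  have hVne : V.Nonempty := basicSet_nonempty hWc f
  have hVb : ∀ y ∈ V, y.1 b = true := by
    intro y hy
    have := hy b (mem_insert _ _)
    rwa [hf, Function.update_self] at this
  have hVE : ∀ q : E, V ⊆ B q.1 := by
    intro q y hy
    refine hAs q y ?_
    intro a ha
    have haW : a ∈ W := mem_insert_of_mem _ (mem_iUnion.mpr ⟨q, ha⟩)
    have hab : a ≠ b := by
      rintro rfl
      exact hbA (mem_iUnion.mpr ⟨q, ha⟩)
    have := hy a haW
    rwa [hf, Function.update_of_ne hab] at this
  obtain ⟨p, hp⟩ := hpi V hVopen hVne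
  have hpE : ∀ q ∈ insert p E, B p ⊆ B q := by
    rintro q (rfl | hq)
    · exact subset_rfl
    · exact hp.trans (hVE ⟨q, hq⟩)
  -- enumerate insert p E
  obtain ⟨e, he⟩ := ((hEc.insert p).exists_eq_range ⟨p, mem_insert _ _⟩)
  have hpe : ∀ n, B p ⊆ B (e n) := fun n => hpE (e n) (he ▸ mem_range_self n)
  -- the fusion sequence
  have key : ∀ t : {t : Q // B t ⊆ B p}, ∀ n : ℕ,
      ∃ t' : {t' : Q // B t' ⊆ B p}, r t.1 t'.1 ∧ r (e n) t'.1 := by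
    intro t n
    have hib : (B t.1 ∩ B (e n)).Nonempty := by
      obtain ⟨z, hz⟩ := (hB t.1).2
      exact ⟨z, hz, hpe n (t.2 hz)⟩
    obtain ⟨t', h1, h2⟩ := hpair t.1 (e n) hib
    exact ⟨⟨t', (hmono _ _ h1).trans t.2⟩, h1, h2⟩
  have u0ex : ∃ t : {t : Q // B t ⊆ B p}, r p t.1 ∧ r (e 0) t.1 := by
    have hib : (B p ∩ B (e 0)).Nonempty := by
      obtain ⟨z, hz⟩ := (hB p).2
      exact ⟨z, hz, hpe 0 hz⟩
    obtain ⟨t', h1, h2⟩ := hpair p (e 0) hib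
    exact ⟨⟨t', hmono _ _ h1⟩, h1, h2⟩
  set u : ℕ → {t : Q // B t ⊆ B p} :=
    fun n => Nat.rec u0ex.choose (fun n ih => (key ih (n + 1)).choose) n with hu
  have hu0 : r p (u 0).1 ∧ r (e 0) (u 0).1 := u0ex.choose_spec
  have husucc : ∀ n, r (u n).1 (u (n + 1)).1 ∧ r (e (n + 1)) (u (n + 1)).1 :=
    fun n => (key (u n) (n + 1)).choose_spec
  have hchain : ∀ m n, m < n → r (u m).1 (u n).1 := by
    intro m n h
    induction n with
    | zero => omega
    | succ k ih =>
      rcases Nat.lt_succ_iff_lt_or_eq.mp h with h' | h'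
      · exact htr (ih h') (husucc k).1
      · exact h' ▸ (husucc k).1
  have hre : ∀ n, r (e n) (u n).1 := by
    intro n
    cases n with
    | zero => exact hu0.2
    | succ k => exact (husucc k).2
  refine ⟨(E ∪ range (fun n => (u n).1), b), fun _ _ => ?_⟩
  have hidx : ∀ a ∈ E ∪ range (fun n => (u n).1), ∃ m, ∀ k, m ≤ k → r a (u k).1 := by
    rintro a (ha | ⟨n, rfl⟩)
    · have : a ∈ insert p E := mem_insert_of_mem _ ha
      rw [he] at this
      obtain ⟨m, rfl⟩ := this
      refine ⟨m, fun k hk => ?_⟩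
      rcases eq_or_lt_of_le hk with rfl | h'
      · exact hre m
      · exact htr (hre m) (hchain m k h')
    · exact ⟨n + 1, fun k hk => hchain n k (by omega)⟩
  refine ⟨subset_union_left, hEc.union (countable_range _),
    ⟨(u 0).1, Or.inr (mem_range_self 0)⟩, ?_, ?_, ?_⟩
  · intro a ha a' ha'
    obtain ⟨m1, h1⟩ := hidx a ha
    obtain ⟨m2, h2⟩ := hidx a' ha'
    exact ⟨(u (max m1 m2)).1, Or.inr (mem_range_self _),
      h1 _ (le_max_left _ _), h2 _ (le_max_right _ _)⟩
  · refine ⟨(u 0).1, Or.inr (mem_range_self 0), ?_⟩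
    intro y hy
    exact hVb y (hp ((u 0).2 hy))
  · rintro b' ⟨q, hqE, hq⟩ rfl
    have : x.1 b' = true := hq (hxq q hqE)
    exact hb (Or.inr this)

/-- σ({0,1}^{ω₁}) with the ω₁-box topology is not F-Y π-domain
representable. -/

theorem stmt12 {I : Type v} (hI : Cardinal.mk I = Cardinal.aleph 1) :
    ¬ FYPiDomainRep.{u} (Sigma01 I) := by
  rintro ⟨Q, r, B, hB, hpi, htr, hmono, hpair, hdir⟩
  classical
  choose step hstep using step_exists hI hB hpi htr hmono hpair
  -- transfinite construction
  let D : Ordinal.{v} → Set Q :=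
    WellFounded.fix Ordinal.lt_wf (fun o ih => (step (⋃ p, ⋃ h : p < o, ih p h)).1)
  have hDeq : ∀ o : Ordinal.{v}, D o = (step (⋃ p ∈ Iio o, D p)).1 := fun o =>
    WellFounded.fix_eq _ _ o
  set Ec : Ordinal.{v} → Set Q := fun o => ⋃ p ∈ Iio o, D p with hEcdef
  set bet : Ordinal.{v} → I := fun o => (step (Ec o)).2 with hbet
  set om : Ordinal.{v} := (Cardinal.aleph 1).ord with hom
  have hcount_Iio : ∀ o : Ordinal.{v}, o < om → Countable (Iio o) := by
    intro o ho
    rw [hom, Cardinal.lt_ord] at ho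
    have h1 : o.card ≤ Cardinal.aleph0 := by
      rw [← Cardinal.succ_aleph0] at ho
      exact Order.lt_succ_iff.mp ho
    have h2 : Cardinal.mk (Iio o) ≤ Cardinal.aleph0 := by
      rw [Ordinal.mk_Iio_ordinal, ← Cardinal.lift_aleph0.{v + 1, v}]
      exact Cardinal.lift_le.mpr h1
    exact Cardinal.mk_le_aleph0_iff.mp h2
  -- the main invariant
  have main : ∀ o : Ordinal.{v}, o < om →
      (D o).Countable ∧ (D o).Nonempty ∧ DirectedOn r (D o) ∧ Ec o ⊆ D o ∧
      (∃ q ∈ D o, B q ⊆ {y : Sigma01 I | y.1 (bet o) = true}) ∧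
      (∀ b, (∃ q ∈ Ec o, B q ⊆ {y : Sigma01 I | y.1 b = true}) → b ≠ bet o) := by
    intro o
    induction o using Ordinal.induction with
    | h o IH =>
      intro ho
      have hmonoD : ∀ p p' : Ordinal.{v}, p ≤ p' → p' < o → D p ⊆ D p' := by
        intro p p' hpp' hp'
        rcases eq_or_lt_of_le hpp' with rfl | h
        · exact subset_rfl
        · exact (subset_biUnion_of_mem (u := D) (show _ ∈ Iio _ from h)).trans
            (IH p' hp' (hp'.trans ho)).2.2.2.1
      have hEcC : (Ec o).Countable := by
        haveI := hcount_Iio o ho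
        refine Countable.biUnion (countable_coe_iff.mp inferInstance) ?_
        intro p hp
        exact (IH p hp (hp.trans ho)).1
      have hEcdir : DirectedOn r (Ec o) := by
        rintro a ha a' ha'
        obtain ⟨pa, hpa, haD⟩ := mem_iUnion₂.mp ha
        obtain ⟨pb, hpb, hbD⟩ := mem_iUnion₂.mp ha'
        rcases le_total pa pb with hle | hle
        · obtain ⟨c, hc, h1, h2⟩ := (IH pb hpb (hpb.trans ho)).2.2.1 a
            (hmonoD pa pb hle hpb haD) a' hbD
          exact ⟨c, mem_biUnion hpb hc, h1, h2⟩
        · obtain ⟨c, hc, h1, h2⟩ := (IH pa hpa (hpa.trans ho)).2.2.1 a haD a'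
            (hmonoD pb pa hle hpa hbD)
          exact ⟨c, mem_biUnion hpa hc, h1, h2⟩
      have hEcne : (⋂ q ∈ Ec o, B q).Nonempty := by
        rcases (Ec o).eq_empty_or_nonempty with h | h
        · obtain ⟨z⟩ := sigma01_nonempty I
          exact ⟨z, by simp [h]⟩
        · exact hdir (Ec o) h hEcdir
      obtain ⟨h1, h2, h3, h4, h5, h6⟩ := hstep (Ec o) hEcC hEcne
      rw [← hDeq o] at h1 h2 h3 h4 h5
      exact ⟨h2, h3, h4, h1, h5, h6⟩
  -- distinct forced coordinates
  have hmonoD : ∀ p p' : Ordinal.{v}, p ≤ p' → p' < om → D p ⊆ D p' := by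
    intro p p' hpp' hp'
    rcases eq_or_lt_of_le hpp' with rfl | h
    · exact subset_rfl
    · exact (subset_biUnion_of_mem (u := D) (show _ ∈ Iio _ from h)).trans (main p' hp').2.2.2.1
  have hinj : ∀ p o : Ordinal.{v}, p < o → o < om → bet p ≠ bet o := by
    intro p o hpo ho
    obtain ⟨q, hq, hforce⟩ := (main p (hpo.trans ho)).2.2.2.2.1
    exact (main o ho).2.2.2.2.2 (bet p) ⟨q, mem_biUnion hpo hq, hforce⟩
  -- the uncountable directed set
  have h0om : (0 : Ordinal.{v}) < om := by
    rw [hom, Cardinal.lt_ord, Ordinal.card_zero]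
    exact Cardinal.aleph0_pos.trans Cardinal.aleph0_lt_aleph_one
  have hTne : (⋃ o ∈ Iio om, D o).Nonempty := by
    obtain ⟨q, hq⟩ := (main 0 h0om).2.1
    exact ⟨q, mem_biUnion h0om hq⟩
  have hTdir : DirectedOn r (⋃ o ∈ Iio om, D o) := by
    rintro a ha a' ha'
    obtain ⟨pa, hpa, haD⟩ := mem_iUnion₂.mp ha
    obtain ⟨pb, hpb, hbD⟩ := mem_iUnion₂.mp ha'
    rcases le_total pa pb with hle | hle
    · obtain ⟨c, hc, hc1, hc2⟩ := (main pb hpb).2.2.1 a (hmonoD pa pb hle hpb haD) a' hbD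
      exact ⟨c, mem_biUnion hpb hc, hc1, hc2⟩
    · obtain ⟨c, hc, hc1, hc2⟩ := (main pa hpa).2.2.1 a haD a' (hmonoD pb pa hle hpa hbD)
      exact ⟨c, mem_biUnion hpa hc, hc1, hc2⟩
  obtain ⟨x, hx⟩ := hdir _ hTne hTdir
  have hxall : ∀ o : Ordinal.{v}, o < om → x.1 (bet o) = true := by
    intro o ho
    obtain ⟨q, hq, hforce⟩ := (main o ho).2.2.2.2.1
    exact hforce (mem_iInter₂.mp hx q (mem_biUnion ho hq))
  -- contradiction with countable support
  haveI hsupp : Countable {a : I // x.1 a = true} := x.2.to_subtype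
  have hcnt : Countable (Iio om) := by
    have hinj2 : Function.Injective
        (fun o : Iio om => (⟨bet o.1, hxall o.1 o.2⟩ : {a : I // x.1 a = true})) := by
      rintro ⟨o1, ho1⟩ ⟨o2, ho2⟩ h
      have hb12 : bet o1 = bet o2 := congrArg Subtype.val h
      rcases lt_trichotomy o1 o2 with h' | h' | h'
      · exact absurd hb12 (hinj o1 o2 h' ho2)
      · exact Subtype.ext h'
      · exact absurd hb12.symm (hinj o2 o1 h' ho1)
    exact hinj2.countable
  have : Cardinal.mk (Iio om) ≤ Cardinal.aleph0 := Cardinal.mk_le_aleph0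
  rw [Ordinal.mk_Iio_ordinal, hom, Cardinal.card_ord,
    ← Cardinal.lift_aleph0.{v + 1, v}] at this
  exact absurd (Cardinal.lift_le.mp this) Cardinal.aleph0_lt_aleph_one.not_ge
end

section
/- There exists a topological space that is F-Y countably domain representable but not F-Y π-domain representable (hence in particular F-Y countably π-domain representable but not F-Y domain representable). -/
open Set TopologicalSpace

universe u v

/-! ### Auxiliary development -/

namespace Stmt13Aux

open Cardinal

variable {I : Type}

theorem mem_basicSet {A : Set I} {f : I → Bool} {y : Sigma01 I} :
    y ∈ basicSet I A f ↔ ∀ a ∈ A, y.1 a = f a := Iff.rfl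

theorem basicSet_isOpen {A : Set I} (hA : A.Countable) (f : I → Bool) :
    IsOpen (basicSet I A f) :=
  TopologicalSpace.isOpen_generateFrom_of_mem ⟨A, f, hA, rfl⟩

/-- The canonical point of a basic set. -/
noncomputable def pt {A : Set I} (hA : A.Countable) (f : I → Bool) : Sigma01 I :=
  haveI := Classical.decPred (· ∈ A)
  ⟨fun a => if a ∈ A then f a else false, by
    apply hA.mono
    intro a ha
    simp only [mem_setOf_eq] at ha
    by_contra h
    simp [h] at ha⟩

theorem pt_mem {A : Set I} (hA : A.Countable) (f : I → Bool) : pt hA f ∈ basicSet I A f := by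
  intro a ha
  simp [pt, ha]

theorem basicSet_nonempty {A : Set I} (hA : A.Countable) (f : I → Bool) :
    (basicSet I A f).Nonempty := ⟨pt hA f, pt_mem hA f⟩

theorem sigma01_basis (I : Type) :
    TopologicalSpace.IsTopologicalBasis
      {U : Set (Sigma01 I) | ∃ (A : Set I) (f : I → Bool), A.Countable ∧ U = basicSet I A f} := by
  refine ⟨?_, ?_, rfl⟩
  · rintro U ⟨A, f, hA, rfl⟩ V ⟨A', f', hA', rfl⟩ x ⟨hx1, hx2⟩
    refine ⟨basicSet I (A ∪ A') x.1, ⟨A ∪ A', x.1, hA.union hA', rfl⟩, fun a _ => rfl, ?_⟩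
    intro y hy
    constructor
    · intro a ha; rw [hy a (Or.inl ha)]; exact hx1 a ha
    · intro a ha; rw [hy a (Or.inr ha)]; exact hx2 a ha
  · apply eq_univ_of_univ_subset
    intro x _
    exact ⟨basicSet I ∅ x.1, ⟨∅, x.1, countable_empty, rfl⟩, fun a ha => absurd ha (notMem_empty a)⟩

theorem exists_basic_nhd {U : Set (Sigma01 I)} (hU : IsOpen U) {x : Sigma01 I} (hx : x ∈ U) :
    ∃ A : Set I, A.Countable ∧ x ∈ basicSet I A x.1 ∧ basicSet I A x.1 ⊆ U := by
  obtain ⟨V, ⟨A, f, hA, rfl⟩, hxV, hVU⟩ := (sigma01_basis I).exists_subset_of_mem_open hx hU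
  refine ⟨A, hA, fun a _ => rfl, ?_⟩
  intro y hy
  apply hVU
  intro a ha
  rw [hy a ha]; exact hxV a ha

/-- P-space property: countable intersections of open sets are "open at each point". -/
theorem exists_basic_nhd_sInter {E : Set (Set (Sigma01 I))} (hE : E.Countable)
    (hop : ∀ s ∈ E, IsOpen s) {x : Sigma01 I} (hx : ∀ s ∈ E, x ∈ s) :
    ∃ A : Set I, A.Countable ∧ x ∈ basicSet I A x.1 ∧ ∀ s ∈ E, basicSet I A x.1 ⊆ s := by
  choose A hA hmem hsub using fun (s : E) => exists_basic_nhd (hop s s.2) (hx s s.2)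
  refine ⟨⋃ s : E, A s, ?_, fun a _ => rfl, ?_⟩
  · haveI := hE.to_subtype
    exact countable_iUnion (fun s => hA s) |>.mono (by simp)
  · intro s hs y hy
    apply hsub ⟨s, hs⟩
    intro a ha
    exact hy a (mem_iUnion.2 ⟨⟨s, hs⟩, ha⟩)

end Stmt13Aux
namespace Stmt13Aux

/-! ### The positive part: countable domain representability -/

/-- The poset for the representation: countable partial functions. -/
def Q0 (I : Type) : Type := {A : Set I // A.Countable} × (I → Bool)

def B0 {I : Type} (q : Q0 I) : Set (Sigma01 I) := basicSet I q.1.1 q.2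

def r0 {I : Type} (p q : Q0 I) : Prop := p.1.1 ⊆ q.1.1 ∧ ∀ a ∈ p.1.1, q.2 a = p.2 a

theorem r0_trans {I : Type} : Transitive (@r0 I) := by
  rintro p q t ⟨h1, h2⟩ ⟨h3, h4⟩
  exact ⟨h1.trans h3, fun a ha => (h4 a (h1 ha)).trans (h2 a ha)⟩

theorem B0_mono {I : Type} (p q : Q0 I) (h : r0 p q) : B0 q ⊆ B0 p := by
  intro y hy a ha
  rw [hy a (h.1 ha)]; exact h.2 a ha

theorem directed_inter {I : Type} (D : Set (Q0 I)) (hct : D.Countable)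
    (hdir : DirectedOn r0 D) : (⋂ q ∈ D, B0 q).Nonempty := by
  classical
  refine ⟨⟨fun a => if h : ∃ p ∈ D, a ∈ p.1.1 ∧ p.2 a = true then true else false, ?_⟩, ?_⟩
  · have hsub : {a : I | (fun a => if h : ∃ p ∈ D, a ∈ p.1.1 ∧ p.2 a = true then true
        else false) a = true} ⊆ ⋃ p ∈ D, p.1.1 := by
      intro a ha
      simp only [mem_setOf_eq] at ha
      by_cases h : ∃ p ∈ D, a ∈ p.1.1 ∧ p.2 a = true
      · obtain ⟨p, hp, hap, _⟩ := h
        exact mem_biUnion hp hap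
      · simp [h] at ha
    exact (hct.biUnion fun p _ => p.1.2).mono hsub
  · refine mem_iInter₂.2 ?_
    intro p hp a ha
    simp only
    by_cases h : ∃ q ∈ D, a ∈ q.1.1 ∧ q.2 a = true
    · rw [dif_pos h]
      obtain ⟨q, hq, haq, hqa⟩ := h
      obtain ⟨t, _, ⟨_, hpt⟩, ⟨_, hqt⟩⟩ := hdir p hp q hq
      rw [← hpt a ha, hqt a haq, hqa]
    · rw [dif_neg h]
      cases hpa : p.2 a
      · rfl
      · exact absurd ⟨p, hp, ha, hpa⟩ h

theorem pos_cdr (I : Type) : FYCountablyDomainRep.{0} (Sigma01 I) := by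
  refine ⟨Q0 I, r0, B0, fun q => ⟨basicSet_isOpen q.1.2 q.2, basicSet_nonempty q.1.2 q.2⟩,
    ?_, r0_trans, B0_mono, ?_, fun D _ hct hdir => directed_inter D hct hdir⟩
  · intro U hU x hx
    obtain ⟨A, hA, hmem, hsub⟩ := exists_basic_nhd hU hx
    exact ⟨(⟨A, hA⟩, x.1), hmem, hsub⟩
  · intro x p hp q hq
    simp only [mem_setOf_eq] at hp hq
    refine ⟨(⟨p.1.1 ∪ q.1.1, p.1.2.union q.1.2⟩, x.1), fun a _ => rfl,
      ⟨subset_union_left, fun a ha => hp a ha⟩,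
      ⟨subset_union_right, fun a ha => hq a ha⟩⟩

/-! ### General implications between the representability notions -/

theorem cdr_to_cpdr {X : Type} [TopologicalSpace X] (h : FYCountablyDomainRep.{0} X) :
    FYCountablyPiDomainRep.{0} X := by
  obtain ⟨Q, r, B, hB, hbase, htr, hmono, hptdir, hint⟩ := h
  refine ⟨Q, r, B, hB, ?_, htr, hmono, ?_, hint⟩
  · intro U hU ⟨x, hx⟩
    obtain ⟨q, _, hsub⟩ := hbase U hU x hx
    exact ⟨q, hsub⟩
  · intro p q ⟨x, hxp, hxq⟩
    obtain ⟨t, _, hpt, hqt⟩ := hptdir x p hxp q hxq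
    exact ⟨t, hpt, hqt⟩

theorem dr_to_pdr {X : Type} [TopologicalSpace X] (h : FYDomainRep.{u} X) :
    FYPiDomainRep.{u} X := by
  obtain ⟨Q, r, B, hB, hbase, htr, hmono, hptdir, hint⟩ := h
  refine ⟨Q, r, B, hB, ?_, htr, hmono, ?_, hint⟩
  · intro U hU ⟨x, hx⟩
    obtain ⟨q, _, hsub⟩ := hbase U hU x hx
    exact ⟨q, hsub⟩
  · intro p q ⟨x, hxp, hxq⟩
    obtain ⟨t, _, hpt, hqt⟩ := hptdir x p hxp q hxq
    exact ⟨t, hpt, hqt⟩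

end Stmt13Aux
namespace Stmt13Aux

open Cardinal

/-! ### The index set: ω₁ -/

/-- The index set of size `ω₁`. -/
abbrev II : Type := ((Cardinal.aleph 1).ord).ToType

theorem mk_II : #II = Cardinal.aleph 1 := by
  rw [Cardinal.mk_toType, Cardinal.card_ord]

instance : Nonempty II := by
  rw [Ordinal.toType_nonempty_iff_ne_zero, ne_eq, Cardinal.ord_eq_zero]
  exact (Cardinal.aleph_pos 1).ne'

theorem fresh (s : Set II) (hs : s.Countable) : ∃ i, i ∉ s := by
  by_contra h
  push_neg at h
  rw [Set.eq_univ_of_forall h, countable_univ_iff] at hs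
  exact (Cardinal.aleph0_lt_aleph_one).not_ge (mk_II ▸ Cardinal.mk_le_aleph0)

theorem Iio_countable (i : II) : (Set.Iio i).Countable := by
  rw [Cardinal.countable_iff_lt_aleph_one]
  have h1 := Ordinal.typein_lt_self i
  have h2 := @Ordinal.card_typein II (· < ·) isWellOrder_lt i
  have h3 : #(Set.Iio i) = #{y // y < i} := rfl
  rw [h3, ← h2, ← Cardinal.lt_ord]
  exact h1

end Stmt13Aux
namespace Stmt13Aux

open Cardinal

theorem not_pdr : ¬ FYPiDomainRep.{u} (Sigma01 II) := by
  classical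
  rintro ⟨Q, r, B, hB, hpi, htr, hmono, hpair, hdirint⟩
  -- a chain through a given `q0` dominating a given sequence below `q0`
  have chain : ∀ (q0 : Q) (p : ℕ → Q), (∀ n, B q0 ⊆ B (p n)) →
      ∃ s : ℕ → Q, s 0 = q0 ∧ (∀ n, B (s n) ⊆ B q0) ∧ (∀ m n, m < n → r (s m) (s n)) ∧
        (∀ n, r (p n) (s (n + 1))) := by
    intro q0 p hp
    set s : ℕ → Q := fun n => Nat.rec q0
      (fun n sn => if h : ∃ t, r sn t ∧ r (p n) t then Classical.choose h else sn) n with hs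
    have hstep : ∀ n, B (s n) ⊆ B q0 →
        r (s n) (s (n + 1)) ∧ r (p n) (s (n + 1)) ∧ B (s (n + 1)) ⊆ B q0 := by
      intro n hn
      obtain ⟨x, hxn⟩ := (hB (s n)).2
      have hex := hpair (s n) (p n) ⟨x, hxn, hp n (hn hxn)⟩
      have e : s (n + 1) = if h : ∃ t, r (s n) t ∧ r (p n) t then Classical.choose h
          else s n := rfl
      rw [e, dif_pos hex]
      obtain ⟨h1, h2⟩ := Classical.choose_spec hex
      exact ⟨h1, h2, (hmono _ _ h1).trans hn⟩
    have hall : ∀ n, B (s n) ⊆ B q0 := by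
      intro n
      induction n with
      | zero => exact subset_rfl
      | succ n ih => exact (hstep n ih).2.2
    have hchain : ∀ m n, m < n → r (s m) (s n) := by
      intro m n h
      induction n with
      | zero => omega
      | succ n ih =>
        rcases Nat.lt_succ_iff_lt_or_eq.1 h with h' | h'
        · exact htr (ih h') (hstep n (hall n)).1
        · rw [h']; exact (hstep n (hall n)).1
    exact ⟨s, rfl, hall, hchain, fun n => (hstep n (hall n)).2.1⟩
  -- a starting countable directed set
  have D0_ex : ∃ D0 : Set Q, D0.Nonempty ∧ D0.Countable ∧ DirectedOn r D0 := by
    obtain ⟨q0, _⟩ := hpi univ isOpen_univ ⟨⟨fun _ => false, by simp⟩, trivial⟩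
    obtain ⟨s, _, _, hsch, _⟩ := chain q0 (fun _ => q0) (fun _ => subset_rfl)
    refine ⟨range s, ⟨s 0, mem_range_self 0⟩, countable_range s, ?_⟩
    rintro a ⟨m, rfl⟩ b ⟨n, rfl⟩
    exact ⟨s (max m n + 1), mem_range_self _,
      hsch m _ (Nat.lt_succ_of_le (le_max_left m n)),
      hsch n _ (Nat.lt_succ_of_le (le_max_right m n))⟩
  obtain ⟨D0, hD0ne, hD0ct, hD0dir⟩ := D0_ex
  -- the one-step extension lemma
  have step_ex : ∀ E : Set Q, E.Nonempty → E.Countable → DirectedOn r E →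
      ∀ used : Set II, used.Countable →
      ∃ (D' : Set Q) (i' : II), E ⊆ D' ∧ D'.Countable ∧ DirectedOn r D' ∧ i' ∉ used ∧
        ∃ q ∈ D', B q ⊆ {y : Sigma01 II | y.1 i' = true} := by
    intro E hne hct hdir used hused
    obtain ⟨x, hx⟩ := hdirint E hne hdir
    rw [mem_iInter₂] at hx
    obtain ⟨A, hA, hxA, hAsub⟩ := exists_basic_nhd_sInter (E := B '' E) (hct.image B)
      (by rintro s ⟨q, hq, rfl⟩; exact (hB q).1)
      (by rintro s ⟨q, hq, rfl⟩; exact hx q hq)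
    obtain ⟨i', hi'⟩ := fresh (A ∪ used) (hA.union hused)
    have hi'A : i' ∉ A := fun h => hi' (Or.inl h)
    have hi'used : i' ∉ used := fun h => hi' (Or.inr h)
    set g : II → Bool := Function.update x.1 i' true with hg
    have hforce_sub : basicSet II (insert i' A) g ⊆ basicSet II A x.1 := by
      intro y hy a ha
      rw [hy a (mem_insert_of_mem _ ha)]
      exact Function.update_of_ne (fun h : a = i' => hi'A (h ▸ ha)) _ _
    obtain ⟨q', hq'⟩ := hpi _ (basicSet_isOpen (hA.insert i') g)
      (basicSet_nonempty (hA.insert i') g)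
    have hq'well : ∀ p ∈ E, B q' ⊆ B p := fun p hp =>
      (hq'.trans hforce_sub).trans (hAsub (B p) (mem_image_of_mem B hp))
    have hq'force : B q' ⊆ {y : Sigma01 II | y.1 i' = true} := by
      intro y hy
      have h1 : y.1 i' = g i' := hq' hy i' (mem_insert i' A)
      rw [mem_setOf_eq, h1, hg, Function.update_self]
    obtain ⟨p, hpE⟩ := hct.exists_eq_range hne
    subst hpE
    have hp' : ∀ n, B q' ⊆ B (p n) := fun n => hq'well (p n) (mem_range_self n)
    obtain ⟨s, hs0, hsB, hsch, hsp⟩ := chain q' p hp'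
    have hup : ∀ m n, m ≤ n → r (p m) (s (n + 1)) := by
      intro m n h
      rcases Nat.lt_or_ge (m + 1) (n + 1) with h' | h'
      · exact htr (hsp m) (hsch (m + 1) (n + 1) h')
      · have : m = n := by omega
        rw [← this]; exact hsp m
    have hup2 : ∀ m n, m ≤ n → r (s m) (s (n + 1)) :=
      fun m n h => hsch m (n + 1) (Nat.lt_succ_of_le h)
    refine ⟨range p ∪ range s, i', subset_union_left,
      (countable_range p).union (countable_range s), ?_, hi'used,
      ⟨q', Or.inr ⟨0, hs0⟩, hq'force⟩⟩
    rintro a (⟨m, rfl⟩ | ⟨m, rfl⟩) b (⟨n, rfl⟩ | ⟨n, rfl⟩)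
    · exact ⟨s (max m n + 1), Or.inr (mem_range_self _),
        hup m _ (le_max_left m n), hup n _ (le_max_right m n)⟩
    · exact ⟨s (max m n + 1), Or.inr (mem_range_self _),
        hup m _ (le_max_left m n), hup2 n _ (le_max_right m n)⟩
    · exact ⟨s (max m n + 1), Or.inr (mem_range_self _),
        hup2 m _ (le_max_left m n), hup n _ (le_max_right m n)⟩
    · exact ⟨s (max m n + 1), Or.inr (mem_range_self _),
        hup2 m _ (le_max_left m n), hup2 n _ (le_max_right m n)⟩

  -- the transfinite construction
  have fixgen : ∀ body : ∀ i : II, (∀ j, j < i → Set Q × II) → Set Q × II,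
      ∃ F : II → Set Q × II, ∀ i, F i = body i (fun j _ => F j) :=
    fun body => ⟨WellFounded.fix (wellFounded_lt (α := II)) body,
      fun i => WellFounded.fix_eq _ _ _⟩
  obtain ⟨F, hF⟩ := fixgen (fun i rec =>
    if h : (D0 ∪ ⋃ j, ⋃ _ : j < i, (rec j ‹_›).1).Nonempty ∧
        (D0 ∪ ⋃ j, ⋃ _ : j < i, (rec j ‹_›).1).Countable ∧
        DirectedOn r (D0 ∪ ⋃ j, ⋃ _ : j < i, (rec j ‹_›).1) ∧
        (⋃ j, ⋃ _ : j < i, {(rec j ‹_›).2}).Countable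
    then ⟨(step_ex _ h.1 h.2.1 h.2.2.1 _ h.2.2.2).choose,
          (step_ex _ h.1 h.2.1 h.2.2.1 _ h.2.2.2).choose_spec.choose⟩
    else (∅, Classical.choice (inferInstance : Nonempty II)))
  simp only [] at hF
  -- the inductive invariants
  have main : ∀ i : II, (∀ j, j < i →
      ((F j).1.Countable ∧ (D0 ∪ ⋃ j', ⋃ _ : j' < j, (F j').1) ⊆ (F j).1 ∧
        DirectedOn r (F j).1 ∧ ((F j).2 ∉ ⋃ j', ⋃ _ : j' < j, {(F j').2}) ∧
        ∃ q ∈ (F j).1, B q ⊆ {y : Sigma01 II | y.1 (F j).2 = true})) →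
      ((F i).1.Countable ∧ (D0 ∪ ⋃ j, ⋃ _ : j < i, (F j).1) ⊆ (F i).1 ∧
        DirectedOn r (F i).1 ∧ ((F i).2 ∉ ⋃ j, ⋃ _ : j < i, {(F j).2}) ∧
        ∃ q ∈ (F i).1, B q ⊆ {y : Sigma01 II | y.1 (F i).2 = true}) := by
    intro i ih
    have hD0sub : ∀ j, j < i → D0 ⊆ (F j).1 :=
      fun j hj => subset_union_left.trans (ih j hj).2.1
    have hsubE : ∀ j, j < i → (F j).1 ⊆ D0 ∪ ⋃ j', ⋃ _ : j' < i, (F j').1 :=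
      fun j hj y hy => Or.inr (mem_iUnion.2 ⟨j, mem_iUnion.2 ⟨hj, hy⟩⟩)
    have hmono2 : ∀ j j', j < i → j' < i → j < j' → (F j).1 ⊆ (F j').1 := by
      intro j j' _ hj' hjj'
      refine subset_trans ?_ (ih j' hj').2.1
      intro y hy
      exact Or.inr (mem_iUnion.2 ⟨j, mem_iUnion.2 ⟨hjj', hy⟩⟩)
    have hEne : (D0 ∪ ⋃ j, ⋃ _ : j < i, (F j).1).Nonempty :=
      ⟨hD0ne.choose, Or.inl hD0ne.choose_spec⟩
    have hEct : (D0 ∪ ⋃ j, ⋃ _ : j < i, (F j).1).Countable := by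
      refine hD0ct.union ?_
      have e : (⋃ j, ⋃ _ : j < i, (F j).1) = ⋃ j ∈ Iio i, (F j).1 := rfl
      rw [e]
      exact (Iio_countable i).biUnion (fun j hj => (ih j hj).1)
    have hEdir : DirectedOn r (D0 ∪ ⋃ j, ⋃ _ : j < i, (F j).1) := by
      have hFdir : ∀ j, j < i → DirectedOn r (F j).1 := fun j hj => (ih j hj).2.2.1
      rintro a (ha | ha) b (hb | hb)
      · obtain ⟨t, ht, h1, h2⟩ := hD0dir a ha b hb
        exact ⟨t, Or.inl ht, h1, h2⟩
      · rw [mem_iUnion] at hb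
        obtain ⟨j, hb⟩ := hb
        rw [mem_iUnion] at hb
        obtain ⟨hj, hb⟩ := hb
        obtain ⟨t, ht, h1, h2⟩ := hFdir j hj a (hD0sub j hj ha) b hb
        exact ⟨t, hsubE j hj ht, h1, h2⟩
      · rw [mem_iUnion] at ha
        obtain ⟨j, ha⟩ := ha
        rw [mem_iUnion] at ha
        obtain ⟨hj, ha⟩ := ha
        obtain ⟨t, ht, h1, h2⟩ := hFdir j hj a ha b (hD0sub j hj hb)
        exact ⟨t, hsubE j hj ht, h1, h2⟩
      · rw [mem_iUnion] at ha hb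
        obtain ⟨j, ha⟩ := ha
        obtain ⟨j', hb⟩ := hb
        rw [mem_iUnion] at ha hb
        obtain ⟨hj, ha⟩ := ha
        obtain ⟨hj', hb⟩ := hb
        rcases lt_trichotomy j j' with h | h | h
        · obtain ⟨t, ht, h1, h2⟩ := hFdir j' hj' a (hmono2 j j' hj hj' h ha) b hb
          exact ⟨t, hsubE j' hj' ht, h1, h2⟩
        · subst h
          obtain ⟨t, ht, h1, h2⟩ := hFdir j hj a ha b hb
          exact ⟨t, hsubE j hj ht, h1, h2⟩
        · obtain ⟨t, ht, h1, h2⟩ := hFdir j hj a ha b (hmono2 j' j hj' hj h hb)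
          exact ⟨t, hsubE j hj ht, h1, h2⟩
    have husedct : (⋃ j, ⋃ _ : j < i, {(F j).2}).Countable := by
      have e : (⋃ j, ⋃ _ : j < i, {(F j).2}) = ⋃ j ∈ Iio i, {(F j).2} := rfl
      rw [e]
      exact (Iio_countable i).biUnion (fun _ _ => countable_singleton _)
    have hcond : (D0 ∪ ⋃ j, ⋃ _ : j < i, (F j).1).Nonempty ∧
        (D0 ∪ ⋃ j, ⋃ _ : j < i, (F j).1).Countable ∧
        DirectedOn r (D0 ∪ ⋃ j, ⋃ _ : j < i, (F j).1) ∧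
        (⋃ j, ⋃ _ : j < i, {(F j).2}).Countable := ⟨hEne, hEct, hEdir, husedct⟩
    have hFi := hF i
    rw [dif_pos hcond] at hFi
    have hspec := (step_ex _ hcond.1 hcond.2.1 hcond.2.2.1 _ hcond.2.2.2).choose_spec.choose_spec
    rw [hFi]
    exact ⟨hspec.2.1, hspec.1, hspec.2.2.1, hspec.2.2.2.1, hspec.2.2.2.2⟩
  have good := fun i => (wellFounded_lt (α := II)).induction
    (C := fun i => ((F i).1.Countable ∧ (D0 ∪ ⋃ j, ⋃ _ : j < i, (F j).1) ⊆ (F i).1 ∧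
      DirectedOn r (F i).1 ∧ ((F i).2 ∉ ⋃ j, ⋃ _ : j < i, {(F j).2}) ∧
      ∃ q ∈ (F i).1, B q ⊆ {y : Sigma01 II | y.1 (F i).2 = true})) i main
  -- the global directed set
  have hDmono : ∀ i j : II, i < j → (F i).1 ⊆ (F j).1 := fun i j hij y hy =>
    (good j).2.1 (Or.inr (mem_iUnion.2 ⟨i, mem_iUnion.2 ⟨hij, hy⟩⟩))
  obtain ⟨i0⟩ := (inferInstance : Nonempty II)
  have hDne : (⋃ i, (F i).1).Nonempty :=
    ⟨hD0ne.choose, mem_iUnion.2 ⟨i0, (good i0).2.1 (Or.inl hD0ne.choose_spec)⟩⟩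
  have hDdir : DirectedOn r (⋃ i, (F i).1) := by
    rintro a ha b hb
    rw [mem_iUnion] at ha hb
    obtain ⟨ia, ha⟩ := ha
    obtain ⟨ib, hb⟩ := hb
    rcases lt_trichotomy ia ib with h | h | h
    · obtain ⟨t, ht, h1, h2⟩ := (good ib).2.2.1 a (hDmono ia ib h ha) b hb
      exact ⟨t, mem_iUnion.2 ⟨ib, ht⟩, h1, h2⟩
    · subst h
      obtain ⟨t, ht, h1, h2⟩ := (good ia).2.2.1 a ha b hb
      exact ⟨t, mem_iUnion.2 ⟨ia, ht⟩, h1, h2⟩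
    · obtain ⟨t, ht, h1, h2⟩ := (good ia).2.2.1 a ha b (hDmono ib ia h hb)
      exact ⟨t, mem_iUnion.2 ⟨ia, ht⟩, h1, h2⟩
  obtain ⟨z, hz⟩ := hdirint (⋃ i, (F i).1) hDne hDdir
  rw [mem_iInter₂] at hz
  have hforced : ∀ i : II, z.1 (F i).2 = true := by
    intro i
    obtain ⟨q, hq, hforce⟩ := (good i).2.2.2.2
    exact hforce (hz q (mem_iUnion.2 ⟨i, hq⟩))
  have hinj : Function.Injective (fun i : II => (F i).2) := by
    intro i j hij
    simp only at hij
    by_contra hne2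
    rcases lt_or_gt_of_ne hne2 with h | h
    · exact (good j).2.2.2.1 (mem_iUnion.2 ⟨i, mem_iUnion.2 ⟨h, by
        rw [mem_singleton_iff]; exact hij.symm⟩⟩)
    · exact (good i).2.2.2.1 (mem_iUnion.2 ⟨j, mem_iUnion.2 ⟨h, by
        rw [mem_singleton_iff]; exact hij⟩⟩)
  have hrange : range (fun i : II => (F i).2) ⊆ {a | z.1 a = true} := by
    rintro _ ⟨i, rfl⟩
    exact hforced i
  have hctr : (range (fun i : II => (F i).2)).Countable := z.2.mono hrange
  haveI := hctr.to_subtype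
  haveI : Countable II := Countable.of_equiv _ (Equiv.ofInjective _ hinj).symm
  obtain ⟨i, hi⟩ := fresh univ countable_univ
  exact hi (mem_univ i)

end Stmt13Aux
/-- there is a space which is F-Y countably domain representable (hence
F-Y countably π-domain representable) but not F-Y π-domain representable (hence not
F-Y domain representable). -/
theorem stmt13 :
    ∃ (X : Type) (_ : TopologicalSpace X),
      FYCountablyDomainRep.{0} X ∧ FYCountablyPiDomainRep.{0} X ∧
      ¬ FYPiDomainRep.{u} X ∧ ¬ FYDomainRep.{u} X := by
  refine ⟨Sigma01 Stmt13Aux.II, inferInstance, Stmt13Aux.pos_cdr _,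
    Stmt13Aux.cdr_to_cpdr (Stmt13Aux.pos_cdr _), Stmt13Aux.not_pdr.{u}, fun h =>
    Stmt13Aux.not_pdr.{u} (Stmt13Aux.dr_to_pdr.{u} h)⟩
end

section
/- If (Q, ≪, B) F-Y countably π-represents a topological space X and additionally |⋂{B(q) : q ∈ D}| = 1 for every countable upward ≪-directed set D ⊆ Q, then (Q, ≪, B) F-Y π-represents X, i.e., ⋂{B(q) : q ∈ D} ≠ ∅ for every upward directed D ⊆ Q of arbitrary cardinality. -/
open Set TopologicalSpace

universe u v

/-- Every countable subset of a directed set extends to a countable directed subset. -/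
theorem exists_countable_directed_superset {Q : Type u} {r : Q → Q → Prop}
    (htrans : Transitive r) {D : Set Q} (hD : DirectedOn r D)
    {S : Set Q} (hS : S ⊆ D) (hSc : S.Countable) (hSne : S.Nonempty) :
    ∃ E : Set Q, S ⊆ E ∧ E ⊆ D ∧ E.Countable ∧ E.Nonempty ∧ DirectedOn r E := by
  obtain ⟨f, hf⟩ := hSc.exists_eq_range hSne
  have hfD : ∀ n, f n ∈ D := fun n => hS (hf ▸ Set.mem_range_self n)
  choose up hupD hup1 hup2 using fun (a : {x // x ∈ D}) (b : {x // x ∈ D}) =>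
    hD a a.2 b b.2
  let up' : {x // x ∈ D} → {x // x ∈ D} → {x // x ∈ D} := fun a b => ⟨up a b, hupD a b⟩
  let g : ℕ → {x // x ∈ D} := fun n => ⟨f n, hfD n⟩
  let c : ℕ → {x // x ∈ D} :=
    fun n => Nat.rec (up' (g 0) (g 0)) (fun n cn => up' cn (g (n + 1))) n
  have hcs : ∀ n, r (c n).1 (c (n + 1)).1 := fun n => hup1 (c n) (g (n + 1))
  have hfc : ∀ n, r (f n) (c n).1 := by
    intro n; cases n with
    | zero => exact hup1 (g 0) (g 0)
    | succ n => exact hup2 (c n) (g (n + 1))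
  have hmono : ∀ i j, i < j → r (c i).1 (c j).1 := by
    intro i j hij
    induction j with
    | zero => omega
    | succ j ih =>
      rcases Nat.lt_succ_iff_lt_or_eq.mp hij with h | h
      · exact htrans (ih h) (hcs j)
      · exact h ▸ hcs j
  refine ⟨S ∪ Set.range (fun n => (c n).1), Set.subset_union_left, ?_, ?_,
    hSne.mono Set.subset_union_left, ?_⟩
  · rintro x (hx | ⟨n, rfl⟩)
    · exact hS hx
    · exact (c n).2
  · exact hSc.union (Set.countable_range _)
  · have key : ∀ x ∈ S ∪ Set.range (fun n => (c n).1),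
        ∃ m, ∀ k, m ≤ k → r x (c k).1 := by
      rintro x (hx | ⟨n, rfl⟩)
      · rw [hf] at hx; obtain ⟨n, rfl⟩ := hx
        exact ⟨n + 1, fun k hk => htrans (hfc n) (hmono n k (by omega))⟩
      · exact ⟨n + 1, fun k hk => hmono n k (by omega)⟩
    intro x hx y hy
    obtain ⟨m, hm⟩ := key x hx
    obtain ⟨m', hm'⟩ := key y hy
    exact ⟨(c (max m m')).1, Or.inr ⟨_, rfl⟩, hm _ (le_max_left _ _),
      hm' _ (le_max_right _ _)⟩

/-- if `(Q, ≪, B)` F-Y countably π-represents `X` and the intersection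
over every countable upward directed set is a singleton, then the triple F-Y
π-represents `X`: the intersection over every upward directed set is nonempty. -/
theorem stmt16 {X : Type v} [TopologicalSpace X] {Q : Type u}
    (r : Q → Q → Prop) (B : Q → Set X)
    (hB : ∀ q, IsOpen (B q) ∧ (B q).Nonempty)
    (hpi : ∀ U : Set X, IsOpen U → U.Nonempty → ∃ q, B q ⊆ U)
    (htrans : Transitive r)
    (hmono : ∀ p q, r p q → B q ⊆ B p)
    (hdir : ∀ p q, (B p ∩ B q).Nonempty → ∃ t, r p t ∧ r q t)
    (hsingle : ∀ D : Set Q, D.Nonempty → D.Countable → DirectedOn r D →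
      ∃ x : X, (⋂ q ∈ D, B q) = {x}) :
    ∀ D : Set Q, D.Nonempty → DirectedOn r D → (⋂ q ∈ D, B q).Nonempty := by
  rintro D ⟨d₀, hd₀⟩ hDdir
  obtain ⟨E₀, hS0, hE0D, hE0c, hE0ne, hE0dir⟩ :=
    exists_countable_directed_superset htrans hDdir
      (Set.singleton_subset_iff.mpr hd₀) (Set.countable_singleton d₀) ⟨d₀, rfl⟩
  obtain ⟨x, hx⟩ := hsingle E₀ hE0ne hE0c hE0dir
  refine ⟨x, Set.mem_iInter₂.mpr fun q hq => ?_⟩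
  obtain ⟨E, hSE, hED, hEc, hEne, hEdir⟩ :=
    exists_countable_directed_superset htrans hDdir
      (Set.union_subset hE0D (Set.singleton_subset_iff.mpr hq))
      (hE0c.union (Set.countable_singleton q)) (hE0ne.mono Set.subset_union_left)
  obtain ⟨y, hy⟩ := hsingle E hEne hEc hEdir
  have hyE : y ∈ ⋂ p ∈ E, B p := hy ▸ rfl
  have hy0 : y ∈ ⋂ p ∈ E₀, B p := Set.mem_iInter₂.mpr fun p hp =>
    Set.mem_iInter₂.mp hyE p (hSE (Or.inl hp))
  have hxy : y = x := by rw [hx] at hy0; exact hy0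
  exact hxy ▸ Set.mem_iInter₂.mp hyE q (hSE (Or.inr rfl))
end

section
/- If X is F-Y countably π-domain representable, then X is a Baire space. -/
open Set TopologicalSpace

universe u v

/-- every F-Y countably π-domain representable space is a Baire space. -/
theorem stmt19 {X : Type v} [TopologicalSpace X]
    (h : FYCountablyPiDomainRep.{u} X) : BaireSpace X := by
  obtain ⟨Q, r, B, hB, hπ, htrans, hmono, hub, hcap⟩ := h
  constructor
  intro f hfo hfd
  rw [dense_iff_inter_open]
  intro U hU hUne
  obtain ⟨q0, hq0⟩ := hπ U hU hUne
  have step : ∀ (n : ℕ) (q : Q), ∃ q', r q q' ∧ B q' ⊆ f n := by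
    intro n q
    have h1 : (B q ∩ f n).Nonempty :=
      (hfd n).inter_open_nonempty _ (hB q).1 (hB q).2
    obtain ⟨p, hp⟩ := hπ (B q ∩ f n) ((hB q).1.inter (hfo n)) h1
    have hne : (B p ∩ B q).Nonempty := by
      obtain ⟨x, hx⟩ := (hB p).2
      exact ⟨x, hx, (hp hx).1⟩
    obtain ⟨t, hpt, hqt⟩ := hub p q hne
    exact ⟨t, hqt, fun x hx => (hp (hmono p t hpt hx)).2⟩
  choose g hg1 hg2 using step
  set q : ℕ → Q := fun n => Nat.rec q0 (fun n qn => g n qn) n with hq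
  have hstep : ∀ n, r (q n) (q (n + 1)) := fun n => hg1 n (q n)
  have hchain : ∀ m n, m < n → r (q m) (q n) := by
    intro m n hmn
    induction n with
    | zero => omega
    | succ n ih =>
      rcases Nat.lt_succ_iff_lt_or_eq.mp hmn with h' | h'
      · exact htrans (ih h') (hstep n)
      · exact h' ▸ hstep m
  have hD : DirectedOn r (Set.range q) := by
    rintro _ ⟨m, rfl⟩ _ ⟨n, rfl⟩
    exact ⟨q (max m n + 1), ⟨max m n + 1, rfl⟩,
      hchain m (max m n + 1) (by omega), hchain n (max m n + 1) (by omega)⟩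
  obtain ⟨x, hx⟩ := hcap (Set.range q) ⟨q 0, 0, rfl⟩ (Set.countable_range q) hD
  simp only [Set.mem_iInter] at hx
  refine ⟨x, hq0 (hx (q 0) ⟨0, rfl⟩), ?_⟩
  exact Set.mem_iInter.mpr fun n => hg2 n (q n) (hx (q (n + 1)) ⟨n + 1, rfl⟩)
end
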